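/- Let C, R > 0 and let φ ∈ C^2(ℝ^d) have compact support contained in the closed ball B̄_R, with ‖∇φ‖_{L^∞(ℝ^d)} ≤ C R^{−1} and ‖D²φ‖_{L^∞(ℝ^d)} ≤ C R^{−2}. Then there exist constants C̃ > 0 depending only on d, s, Λ and C, and γ > 0 depending only on s (one may take γ = 1−2s if s < 1/2, γ = 2−2s if s > 1/2, and γ = 1/2 if s = 1/2), such that for all x, y ∈ ℝ^d, |M_ρ^± φ(x) − M_ρ^± φ(y)| ≤ (C̃/R^{2s}) (|x−y|/R)^γ (both for M_ρ^+ and for M_ρ^−). -/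

import Mathlib

open MeasureTheory Metric Set
open scoped Classical

noncomputable section

abbrev Ed (d : ℕ) := EuclideanSpace ℝ (Fin d)

/-- `min{|y|^{-d-2s}, ρ^{-d-2s}}`, with the convention that it equals `|y|^{-d-2s}` when `ρ = 0`. -/
def truncKer (d : ℕ) (s ρ : ℝ) (y : Ed d) : ℝ :=
  if ρ = 0 then ‖y‖ ^ (-(d : ℝ) - 2 * s)
  else min (‖y‖ ^ (-(d : ℝ) - 2 * s)) (ρ ^ (-(d : ℝ) - 2 * s))

/-- The kernel class `𝒦_ρ` with ellipticity constants `lam ≤ Lam` and order `2s`. -/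
def KernelClass (d : ℕ) (s lam Lam ρ : ℝ) : Set (Ed d → ℝ) :=
  {K | Measurable K ∧ (∀ y, 0 ≤ K y) ∧
    (∀ y : Ed d, y ≠ 0 → lam * truncKer d s ρ y ≤ K y) ∧
    (∀ r : ℝ, 0 < r →
      ∫⁻ y in ball (0 : Ed d) (2 * r) \ ball 0 r, ENNReal.ofReal (K y) ≤
        ENNReal.ofReal (Lam * r ^ (-(2 * s)))) ∧
    (s = 1 / 2 → ∀ r : ℝ, 0 < r →
      (∫ y in ball (0 : Ed d) (2 * r) \ ball 0 r, K y • y) = (0 : Ed d))}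

/-- The increment `δ_y u (x)`, whose form depends on whether `s < 1/2`, `s = 1/2` or `s > 1/2`. -/
def incr (d : ℕ) (s : ℝ) (u : Ed d → ℝ) (x y : Ed d) : ℝ :=
  if s < 1 / 2 then u (x + y) - u x
  else if s = 1 / 2 then u (x + y) - u x - (if ‖y‖ < 1 then fderiv ℝ u x y else 0)
  else u (x + y) - u x - fderiv ℝ u x y

/-- The linear integro-differential operator `L_K u (x) = ∫ δ_y u(x) K(y) dy`. -/
def opL (d : ℕ) (s : ℝ) (K u : Ed d → ℝ) (x : Ed d) : ℝ :=
  ∫ y, incr d s u x y * K y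

/-- Pucci extremal operator `M_ρ^- u(x) = inf_{K ∈ 𝒦_ρ} L_K u (x)`. -/
def pucciInf (d : ℕ) (s lam Lam ρ : ℝ) (u : Ed d → ℝ) (x : Ed d) : ℝ :=
  sInf ((fun K => opL d s K u x) '' KernelClass d s lam Lam ρ)

/-- Pucci extremal operator `M_ρ^+ u(x) = sup_{K ∈ 𝒦_ρ} L_K u (x)`. -/
def pucciSup (d : ℕ) (s lam Lam ρ : ℝ) (u : Ed d → ℝ) (x : Ed d) : ℝ :=
  sSup ((fun K => opL d s K u x) '' KernelClass d s lam Lam ρ)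

/-- Parabolic distance `d((x,t),(y,τ)) = max{|x-y|, |t-τ|^{1/(2s)}}`. -/
def parDist (d : ℕ) (s : ℝ) (p q : Ed d × ℝ) : ℝ :=
  max ‖p.1 - q.1‖ (|p.2 - q.2| ^ (1 / (2 * s)))

/-- The function `v` that equals the test function `φ` on the test cylinder
`B_ε(x₀) × (t₀-ε, t₀]` and `u` elsewhere. -/
def patchFn (d : ℕ) (u φ : Ed d → ℝ → ℝ) (x₀ : Ed d) (t₀ ε : ℝ) : Ed d → ℝ → ℝ :=
  fun x t => if x ∈ ball x₀ ε ∧ t ∈ Ioc (t₀ - ε) t₀ then φ x t else u x t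

/-- `φ` is an admissible (parabolic) test function on the cylinder `B_ε(x₀) × (t₀-ε, t₀]`:
`C^{1,1}` in space and left-differentiable in time. -/
def IsTestFn (d : ℕ) (φ : Ed d → ℝ → ℝ) (x₀ : Ed d) (t₀ ε : ℝ) : Prop :=
  (∀ t ∈ Ioc (t₀ - ε) t₀, ∀ x ∈ ball x₀ ε, DifferentiableAt ℝ (fun z => φ z t) x) ∧
  (∀ t ∈ Ioc (t₀ - ε) t₀, ∃ L : NNReal,
    LipschitzOnWith L (fun x => fderiv ℝ (fun z => φ z t) x) (ball x₀ ε)) ∧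
  (∀ x ∈ ball x₀ ε, ∀ t ∈ Ioc (t₀ - ε) t₀,
    ∃ D : ℝ, HasDerivWithinAt (fun τ => φ x τ) D (Iic t) t)

/-- Viscosity supersolution of `∂ₜ u + drift·|∇u| − M u ≥ f` in `Ω × I`. -/
def IsViscSuper (d : ℕ) (drift : ℝ) (M : (Ed d → ℝ) → Ed d → ℝ)
    (f : Ed d → ℝ → ℝ) (Ω : Set (Ed d)) (I : Set ℝ) (u : Ed d → ℝ → ℝ) : Prop :=
  LowerSemicontinuousOn (fun p : Ed d × ℝ => u p.1 p.2) (Ω ×ˢ I) ∧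
  ∀ x₀ ∈ Ω, ∀ t₀ ∈ I, ∀ ε : ℝ, 0 < ε → ball x₀ ε ⊆ Ω → Ioc (t₀ - ε) t₀ ⊆ I →
    ∀ φ : Ed d → ℝ → ℝ, IsTestFn d φ x₀ t₀ ε → φ x₀ t₀ = u x₀ t₀ →
      (∀ x ∈ ball x₀ ε, ∀ t ∈ Ioc (t₀ - ε) t₀, φ x t ≤ u x t) →
      f x₀ t₀ ≤
        derivWithin (patchFn d u φ x₀ t₀ ε x₀) (Iic t₀) t₀
          + drift * ‖fderiv ℝ (fun z => patchFn d u φ x₀ t₀ ε z t₀) x₀‖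
          - M (fun z => patchFn d u φ x₀ t₀ ε z t₀) x₀

/-- Viscosity subsolution of `∂ₜ u − drift·|∇u| − M u ≤ f` in `Ω × I`. -/
def IsViscSub (d : ℕ) (drift : ℝ) (M : (Ed d → ℝ) → Ed d → ℝ)
    (f : Ed d → ℝ → ℝ) (Ω : Set (Ed d)) (I : Set ℝ) (u : Ed d → ℝ → ℝ) : Prop :=
  UpperSemicontinuousOn (fun p : Ed d × ℝ => u p.1 p.2) (Ω ×ˢ I) ∧
  ∀ x₀ ∈ Ω, ∀ t₀ ∈ I, ∀ ε : ℝ, 0 < ε → ball x₀ ε ⊆ Ω → Ioc (t₀ - ε) t₀ ⊆ I →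
    ∀ φ : Ed d → ℝ → ℝ, IsTestFn d φ x₀ t₀ ε → φ x₀ t₀ = u x₀ t₀ →
      (∀ x ∈ ball x₀ ε, ∀ t ∈ Ioc (t₀ - ε) t₀, u x t ≤ φ x t) →
      derivWithin (patchFn d u φ x₀ t₀ ε x₀) (Iic t₀) t₀
          - drift * ‖fderiv ℝ (fun z => patchFn d u φ x₀ t₀ ε z t₀) x₀‖
          - M (fun z => patchFn d u φ x₀ t₀ ε z t₀) x₀ ≤ f x₀ t₀

namespace S9
open scoped ENNReal NNReal


def dyC (s p q : ℝ) : ℝ :=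
  2 ^ (2*s) / (1 - 2 ^ (2*s - p)) + 2 ^ q / (1 - 2 ^ (q - 2*s))

lemma two_rpow_lt_one {e : ℝ} (he : e < 0) : (2:ℝ) ^ e < 1 :=
  Real.rpow_lt_one_of_one_lt_of_neg one_lt_two he


lemma dyC_pos {s p q : ℝ} (hq : q < 2*s) (hp : 2*s < p) : 0 < dyC s p q := by
  have h1 : (0:ℝ) < 1 - 2 ^ (2*s - p) := by
    have := two_rpow_lt_one (show 2*s - p < 0 by linarith); linarith
  have h2 : (0:ℝ) < 1 - 2 ^ (q - 2*s) := by
    have := two_rpow_lt_one (show q - 2*s < 0 by linarith); linarith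
  have h3 := Real.rpow_pos_of_pos (show (0:ℝ) < 2 by norm_num) (2*s)
  have h4 := Real.rpow_pos_of_pos (show (0:ℝ) < 2 by norm_num) q
  have := div_pos h3 h1
  have := div_pos h4 h2
  unfold dyC; linarith

lemma rid_div (h₀ : ℝ) (hh : 0 < h₀) (n : ℕ) (e : ℝ) :
    (h₀/2^n) ^ e = h₀ ^ e * ((2:ℝ)^(-e))^n := by
  have h2 : (0:ℝ) ≤ 2 := by norm_num
  rw [Real.div_rpow hh.le (by positivity), ← Real.rpow_natCast 2 n,
    ← Real.rpow_mul h2, mul_comm (n:ℝ) e, Real.rpow_mul h2, Real.rpow_natCast,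
    div_eq_mul_inv, ← inv_pow, ← Real.rpow_neg h2]

lemma rid_mul (h₀ : ℝ) (hh : 0 < h₀) (n : ℕ) (e : ℝ) :
    (h₀*2^n) ^ e = h₀ ^ e * ((2:ℝ)^e)^n := by
  have h2 : (0:ℝ) ≤ 2 := by norm_num
  rw [Real.mul_rpow hh.le (by positivity), ← Real.rpow_natCast 2 n,
    ← Real.rpow_mul h2, mul_comm (n:ℝ) e, Real.rpow_mul h2, Real.rpow_natCast]

/-- geometric series in ENNReal of ofReal terms -/
lemma tsum_ofReal_geom {u w : ℝ} (hu : 0 ≤ u) (hw0 : 0 ≤ w) (hw1 : w < 1) :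
    (∑' n : ℕ, ENNReal.ofReal (u * w ^ n)) = ENNReal.ofReal (u / (1 - w)) := by
  have h1 : ∀ n : ℕ, ENNReal.ofReal (u * w ^ n)
      = ENNReal.ofReal u * (ENNReal.ofReal w) ^ n := by
    intro n
    rw [ENNReal.ofReal_mul hu, ENNReal.ofReal_pow hw0]
  simp_rw [h1]
  rw [ENNReal.tsum_mul_left, ENNReal.tsum_geometric]
  have h2 : (1:ℝ≥0∞) - ENNReal.ofReal w = ENNReal.ofReal (1 - w) := by
    rw [ENNReal.ofReal_sub 1 hw0, ENNReal.ofReal_one]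
  rw [h2, ← ENNReal.ofReal_inv_of_pos (by linarith), ← ENNReal.ofReal_mul hu,
    div_eq_mul_inv]

lemma ann_bound {d : ℕ} {s Lam : ℝ} {K : Ed d → ℝ} (hKm : Measurable K)
    (hKu : ∀ r : ℝ, 0 < r →
      ∫⁻ y in ball (0 : Ed d) (2*r) \ ball 0 r, ENNReal.ofReal (K y) ≤
        ENNReal.ofReal (Lam * r ^ (-(2*s))))
    {r c : ℝ} (hr : 0 < r) (hc : 0 ≤ c) {G : Ed d → ℝ}
    (hG : ∀ z ∈ ball (0:Ed d) (2*r) \ ball 0 r, G z ≤ c) :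
    ∫⁻ z in ball (0:Ed d) (2*r) \ ball 0 r,
        ENNReal.ofReal (G z) * ENNReal.ofReal (K z) ≤
      ENNReal.ofReal (c * (Lam * r ^ (-(2*s)))) := by
  calc ∫⁻ z in ball (0:Ed d) (2*r) \ ball 0 r,
        ENNReal.ofReal (G z) * ENNReal.ofReal (K z)
      ≤ ∫⁻ z in ball (0:Ed d) (2*r) \ ball 0 r,
        ENNReal.ofReal c * ENNReal.ofReal (K z) := by
        apply setLIntegral_mono (by exact (measurable_const.mul hKm.ennreal_ofReal))
        intro z hz
        exact mul_le_mul_left (ENNReal.ofReal_le_ofReal (hG z hz)) _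
    _ = ENNReal.ofReal c * ∫⁻ z in ball (0:Ed d) (2*r) \ ball 0 r,
        ENNReal.ofReal (K z) := lintegral_const_mul _ hKm.ennreal_ofReal
    _ ≤ ENNReal.ofReal c * ENNReal.ofReal (Lam * r ^ (-(2*s))) :=
        mul_le_mul_right (hKu r hr) _
    _ = ENNReal.ofReal (c * (Lam * r ^ (-(2*s)))) := by
        rw [ENNReal.ofReal_mul hc]

lemma dyadic {d : ℕ} {s Lam : ℝ} (hs0 : 0 < s) (hLam : 0 < Lam) {K : Ed d → ℝ}
    (hKm : Measurable K)
    (hKu : ∀ r : ℝ, 0 < r →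
      ∫⁻ y in ball (0 : Ed d) (2*r) \ ball 0 r, ENNReal.ofReal (K y) ≤
        ENNReal.ofReal (Lam * r ^ (-(2*s))))
    {p q A h₀ : ℝ} (hq0 : 0 ≤ q) (hq : q < 2*s) (hp : 2*s < p) (hA : 0 ≤ A)
    (hh : 0 < h₀) :
    ∫⁻ z, ENNReal.ofReal (A * min (‖z‖ ^ p) (h₀ ^ (p-q) * ‖z‖ ^ q)) *
        ENNReal.ofReal (K z) ≤
      ENNReal.ofReal (A * Lam * dyC s p q * h₀ ^ (p - 2*s)) := by
  have hp0 : 0 < p := by linarith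
  have h2 : (0:ℝ) ≤ 2 := by norm_num
  set F : Ed d → ℝ≥0∞ := fun z =>
    ENNReal.ofReal (A * min (‖z‖ ^ p) (h₀ ^ (p-q) * ‖z‖ ^ q)) *
      ENNReal.ofReal (K z) with hF
  set AnnI : ℕ → Set (Ed d) := fun n =>
    ball (0:Ed d) (2*(h₀/2^(n+1))) \ ball 0 (h₀/2^(n+1)) with hAnnI
  set AnnO : ℕ → Set (Ed d) := fun n =>
    ball (0:Ed d) (2*(h₀*2^n)) \ ball 0 (h₀*2^n) with hAnnO
  have hcov : (univ : Set (Ed d)) ⊆ ({0} ∪ ⋃ n, AnnI n) ∪ ⋃ n, AnnO n := by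
    intro z _
    rcases eq_or_ne z 0 with rfl | hz
    · exact Or.inl (Or.inl rfl)
    have hzpos : 0 < ‖z‖ := norm_pos_iff.2 hz
    rcases lt_or_ge ‖z‖ h₀ with hlt | hge
    · left; right
      have hex : ∃ n : ℕ, h₀/2^(n+1) ≤ ‖z‖ := by
        obtain ⟨n, hn⟩ := exists_pow_lt_of_lt_one (div_pos hzpos hh)
          (show (1:ℝ)/2 < 1 by norm_num)
        refine ⟨n, ?_⟩
        have hmono : h₀ * (1/2:ℝ)^(n+1) ≤ h₀ * (1/2)^n := by
          apply mul_le_mul_of_nonneg_left _ hh.le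
          apply pow_le_pow_of_le_one (by norm_num) (by norm_num); omega
        have h1 : h₀ * (1/2:ℝ)^n < ‖z‖ := by
          calc h₀ * (1/2:ℝ)^n < h₀ * (‖z‖/h₀) := (mul_lt_mul_iff_right₀ hh).2 hn
            _ = ‖z‖ := by field_simp
        have he : h₀/2^(n+1) = h₀ * (1/2:ℝ)^(n+1) := by
          rw [div_pow]; ring
        rw [he]; exact le_trans hmono h1.le
      refine mem_iUnion.2 ⟨Nat.find hex, ?_⟩
      simp only [hAnnI, mem_diff, mem_ball_zero_iff]
      have hspec : h₀/2^(Nat.find hex + 1) ≤ ‖z‖ := Nat.find_spec hex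
      have hupper : ‖z‖ < h₀/2^(Nat.find hex) := by
        rcases Nat.eq_zero_or_pos (Nat.find hex) with h0 | hpos
        · rw [h0]; simpa using hlt
        · obtain ⟨m, hm⟩ := Nat.exists_eq_succ_of_ne_zero hpos.ne'
          have hmin := Nat.find_min hex (show m < Nat.find hex by omega)
          push_neg at hmin
          rw [hm]; exact hmin
      constructor
      · have hee : 2*(h₀/2^(Nat.find hex + 1)) = h₀/2^(Nat.find hex) := by
          rw [pow_succ]; field_simp; ring
        rw [hee]; exact hupper
      · simpa using not_lt.2 hspec
    · right
      have hex : ∃ n : ℕ, ‖z‖ < h₀*2^(n+1) := by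
        obtain ⟨n, hn⟩ := pow_unbounded_of_one_lt (‖z‖/h₀) (show (1:ℝ) < 2 by norm_num)
        refine ⟨n, ?_⟩
        have h1 : ‖z‖ < h₀ * 2^n := by
          rw [div_lt_iff₀ hh] at hn; linarith [hn]
        have h2n : h₀*2^n ≤ h₀*2^(n+1) := by
          apply mul_le_mul_of_nonneg_left _ hh.le
          apply pow_le_pow_right₀ (by norm_num); omega
        linarith
      refine mem_iUnion.2 ⟨Nat.find hex, ?_⟩
      simp only [hAnnO, mem_diff, mem_ball_zero_iff]
      have hspec : ‖z‖ < h₀*2^(Nat.find hex + 1) := Nat.find_spec hex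
      have hlower : h₀*2^(Nat.find hex) ≤ ‖z‖ := by
        rcases Nat.eq_zero_or_pos (Nat.find hex) with h0 | hpos
        · rw [h0]; simpa using hge
        · obtain ⟨m, hm⟩ := Nat.exists_eq_succ_of_ne_zero hpos.ne'
          have hmin := Nat.find_min hex (show m < Nat.find hex by omega)
          push_neg at hmin
          rw [hm]; exact hmin
      refine ⟨?_, by simpa using not_lt.2 hlower⟩
      have hee : 2*(h₀*2^(Nat.find hex)) = h₀*2^(Nat.find hex + 1) := by
        rw [pow_succ]; ring
      rw [hee]; exact hspec
  have hsplit : ∫⁻ z, F z ≤ (∫⁻ z in ({0}: Set (Ed d)), F z) +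
      (∑' n, ∫⁻ z in AnnI n, F z) + ∑' n, ∫⁻ z in AnnO n, F z := by
    calc ∫⁻ z, F z = ∫⁻ z in (univ : Set (Ed d)), F z := (setLIntegral_univ F).symm
      _ ≤ ∫⁻ z in ({0} ∪ ⋃ n, AnnI n) ∪ ⋃ n, AnnO n, F z :=
          lintegral_mono_set hcov
      _ ≤ (∫⁻ z in ({0} ∪ ⋃ n, AnnI n), F z) + ∫⁻ z in ⋃ n, AnnO n, F z :=
          lintegral_union_le _ _ _
      _ ≤ ((∫⁻ z in ({0}: Set (Ed d)), F z) + ∫⁻ z in ⋃ n, AnnI n, F z)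
            + ∫⁻ z in ⋃ n, AnnO n, F z := by
          gcongr
          exact lintegral_union_le _ _ _
      _ ≤ _ := by
          gcongr
          · exact lintegral_iUnion_le _ _
          · exact lintegral_iUnion_le _ _
  -- singleton part vanishes
  have hzero : ∫⁻ z in ({0}: Set (Ed d)), F z = 0 := by
    have h0 : ∀ z ∈ ({0}: Set (Ed d)), F z = 0 := by
      intro z hz
      rcases mem_singleton_iff.1 hz with rfl
      have : ‖(0:Ed d)‖ ^ p = 0 := by
        rw [norm_zero, Real.zero_rpow hp0.ne']
      rw [hF]
      simp only [this]
      rw [min_eq_left (by positivity), mul_zero, ENNReal.ofReal_zero, zero_mul]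
    rw [setLIntegral_congr_fun (measurableSet_singleton (0:Ed d))
      (fun z hz => h0 z hz)]
    simp
  -- inner terms
  have key_inner : ∀ n : ℕ, ∫⁻ z in AnnI n, F z ≤
      ENNReal.ofReal ((A*Lam*h₀^(p-2*s)*2^(2*s)) * ((2:ℝ)^(2*s-p))^n) := by
    intro n
    have hr : 0 < h₀/2^(n+1) := by positivity
    have hee : 2*(h₀/2^(n+1)) = h₀/2^n := by
      rw [pow_succ]; field_simp
    have hc : (0:ℝ) ≤ A * (h₀/2^n)^p := by positivity
    have hG : ∀ z ∈ ball (0:Ed d) (2*(h₀/2^(n+1))) \ ball 0 (h₀/2^(n+1)),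
        A * min (‖z‖ ^ p) (h₀ ^ (p-q) * ‖z‖ ^ q) ≤ A * (h₀/2^n)^p := by
      intro z hz
      have hzlt : ‖z‖ < h₀/2^n := by
        rw [← hee]; exact mem_ball_zero_iff.1 hz.1
      refine mul_le_mul_of_nonneg_left (le_trans (min_le_left _ _) ?_) hA
      exact Real.rpow_le_rpow (norm_nonneg z) hzlt.le hp0.le
    refine le_trans (ann_bound hKm hKu hr hc hG) (le_of_eq (congrArg ENNReal.ofReal ?_))
    rw [rid_div h₀ hh n p, rid_div h₀ hh (n+1) (-(2*s)), neg_neg,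
      show h₀^(p-2*s) = h₀^p * h₀^(-(2*s)) by
        rw [sub_eq_add_neg, Real.rpow_add hh],
      show (2:ℝ)^(2*s-p) = (2:ℝ)^(2*s) * (2:ℝ)^(-p) by
        rw [sub_eq_add_neg, Real.rpow_add (show (0:ℝ) < 2 by norm_num)]]
    ring
  -- outer terms
  have key_outer : ∀ n : ℕ, ∫⁻ z in AnnO n, F z ≤
      ENNReal.ofReal ((A*Lam*h₀^(p-2*s)*2^q) * ((2:ℝ)^(q-2*s))^n) := by
    intro n
    have hr : 0 < h₀*2^n := by positivity
    have hee : 2*(h₀*2^n) = h₀*2^(n+1) := by rw [pow_succ]; ring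
    have hc : (0:ℝ) ≤ A * (h₀^(p-q) * (h₀*2^(n+1))^q) := by positivity
    have hG : ∀ z ∈ ball (0:Ed d) (2*(h₀*2^n)) \ ball 0 (h₀*2^n),
        A * min (‖z‖ ^ p) (h₀ ^ (p-q) * ‖z‖ ^ q) ≤
          A * (h₀^(p-q) * (h₀*2^(n+1))^q) := by
      intro z hz
      have hzlt : ‖z‖ < h₀*2^(n+1) := by
        rw [← hee]; exact mem_ball_zero_iff.1 hz.1
      refine mul_le_mul_of_nonneg_left (le_trans (min_le_right _ _) ?_) hA
      refine mul_le_mul_of_nonneg_left ?_ (by positivity)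
      exact Real.rpow_le_rpow (norm_nonneg z) hzlt.le hq0
    refine le_trans (ann_bound hKm hKu hr hc hG) (le_of_eq (congrArg ENNReal.ofReal ?_))
    rw [rid_mul h₀ hh (n+1) q, rid_mul h₀ hh n (-(2*s)),
      show h₀^(p-2*s) = h₀^(p-q) * h₀^q * h₀^(-(2*s)) by
        rw [show p-2*s = ((p-q)+q) + -(2*s) by ring, Real.rpow_add hh,
          Real.rpow_add hh],
      show (2:ℝ)^(q-2*s) = (2:ℝ)^q * (2:ℝ)^(-(2*s)) by
        rw [sub_eq_add_neg, Real.rpow_add (show (0:ℝ) < 2 by norm_num)]]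
    ring
  -- sum up
  have hwI0 : (0:ℝ) ≤ (2:ℝ)^(2*s-p) := (Real.rpow_pos_of_pos (by norm_num) _).le
  have hwI1 : (2:ℝ)^(2*s-p) < 1 := two_rpow_lt_one (by linarith)
  have hwO0 : (0:ℝ) ≤ (2:ℝ)^(q-2*s) := (Real.rpow_pos_of_pos (by norm_num) _).le
  have hwO1 : (2:ℝ)^(q-2*s) < 1 := two_rpow_lt_one (by linarith)
  have huI : (0:ℝ) ≤ A*Lam*h₀^(p-2*s)*2^(2*s) := by
    have := Real.rpow_nonneg hh.le (p-2*s)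
    have := Real.rpow_nonneg (show (0:ℝ) ≤ 2 by norm_num) (2*s)
    positivity
  have huO : (0:ℝ) ≤ A*Lam*h₀^(p-2*s)*2^q := by
    have := Real.rpow_nonneg hh.le (p-2*s)
    have := Real.rpow_nonneg (show (0:ℝ) ≤ 2 by norm_num) q
    positivity
  have hSI : (∑' n, ∫⁻ z in AnnI n, F z) ≤
      ENNReal.ofReal ((A*Lam*h₀^(p-2*s)*2^(2*s)) / (1 - 2^(2*s-p))) := by
    refine le_trans (ENNReal.tsum_le_tsum key_inner) (le_of_eq ?_)
    exact tsum_ofReal_geom huI hwI0 hwI1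
  have hSO : (∑' n, ∫⁻ z in AnnO n, F z) ≤
      ENNReal.ofReal ((A*Lam*h₀^(p-2*s)*2^q) / (1 - 2^(q-2*s))) := by
    refine le_trans (ENNReal.tsum_le_tsum key_outer) (le_of_eq ?_)
    exact tsum_ofReal_geom huO hwO0 hwO1
  refine le_trans hsplit ?_
  rw [hzero, zero_add]
  refine le_trans (add_le_add hSI hSO) (le_of_eq ?_)
  have hd1 : (0:ℝ) < 1 - 2^(2*s-p) := by linarith
  have hd2 : (0:ℝ) < 1 - 2^(q-2*s) := by linarith
  rw [← ENNReal.ofReal_add (div_nonneg huI hd1.le) (div_nonneg huO hd2.le)]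
  congr 1
  rw [dyC]
  field_simp

lemma bound_transfer {d : ℕ} {s Lam : ℝ} (hs0 : 0 < s) (hLam : 0 < Lam)
    {K : Ed d → ℝ} (hKm : Measurable K) (hK0 : ∀ y, 0 ≤ K y)
    (hKu : ∀ r : ℝ, 0 < r →
      ∫⁻ y in ball (0 : Ed d) (2*r) \ ball 0 r, ENNReal.ofReal (K y) ≤
        ENNReal.ofReal (Lam * r ^ (-(2*s))))
    {p q A h₀ : ℝ} (hq0 : 0 ≤ q) (hq : q < 2*s) (hp : 2*s < p) (hA : 0 ≤ A)
    (hh : 0 < h₀) {g : Ed d → ℝ} (hgm : Measurable g)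
    (hgb : ∀ z, |g z| ≤ A * min (‖z‖ ^ p) (h₀ ^ (p-q) * ‖z‖ ^ q)) :
    Integrable (fun z => g z * K z) ∧
      |∫ z, g z * K z| ≤ A * Lam * dyC s p q * h₀ ^ (p - 2*s) := by
  have hB0 : (0:ℝ) ≤ A * Lam * dyC s p q * h₀ ^ (p - 2*s) := by
    have h1 := (dyC_pos hq hp).le
    have h2 := Real.rpow_nonneg hh.le (p - 2*s)
    positivity
  have hptw : ∀ z, ENNReal.ofReal ‖g z * K z‖ ≤
      ENNReal.ofReal (A * min (‖z‖ ^ p) (h₀ ^ (p-q) * ‖z‖ ^ q)) *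
        ENNReal.ofReal (K z) := by
    intro z
    rw [norm_mul, Real.norm_eq_abs, Real.norm_eq_abs, abs_of_nonneg (hK0 z),
      ENNReal.ofReal_mul (abs_nonneg _)]
    exact mul_le_mul_left (ENNReal.ofReal_le_ofReal (hgb z)) _
  have hlin : ∫⁻ z, ENNReal.ofReal ‖g z * K z‖ ≤
      ENNReal.ofReal (A * Lam * dyC s p q * h₀ ^ (p - 2*s)) :=
    le_trans (lintegral_mono hptw) (dyadic hs0 hLam hKm hKu hq0 hq hp hA hh)
  have hint : Integrable (fun z => g z * K z) := by
    refine ⟨(hgm.mul hKm).aestronglyMeasurable, ?_⟩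
    rw [hasFiniteIntegral_iff_norm]
    exact lt_of_le_of_lt hlin ENNReal.ofReal_lt_top
  refine ⟨hint, ?_⟩
  rw [← Real.norm_eq_abs]
  calc ‖∫ z, g z * K z‖ ≤ (∫⁻ z, ENNReal.ofReal ‖g z * K z‖).toReal :=
      norm_integral_le_lintegral_norm _
    _ ≤ (ENNReal.ofReal (A * Lam * dyC s p q * h₀ ^ (p - 2*s))).toReal :=
      ENNReal.toReal_mono ENNReal.ofReal_ne_top hlin
    _ = _ := ENNReal.toReal_ofReal hB0

section PhiFacts

variable {d : ℕ} {φ : Ed d → ℝ} {M1 M2 : ℝ}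

lemma lip_of_bound {F : Type*} [NormedAddCommGroup F] [NormedSpace ℝ F]
    {f : Ed d → F} (hf : Differentiable ℝ f) {M : ℝ}
    (hb : ∀ x, ‖fderiv ℝ f x‖ ≤ M) (a b : Ed d) : ‖f a - f b‖ ≤ M * ‖a - b‖ :=
  Convex.norm_image_sub_le_of_norm_fderiv_le (fun x _ => hf.differentiableAt)
    (fun x _ => hb x) convex_univ (mem_univ b) (mem_univ a)

lemma taylor1 (hφ : ContDiff ℝ 2 φ)
    (hb2 : ∀ x, ‖fderiv ℝ (fun z => fderiv ℝ φ z) x‖ ≤ M2) (x z : Ed d) :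
    |φ (x+z) - φ x - fderiv ℝ φ x z| ≤ M2 * (‖z‖ * ‖z‖) := by
  have hφd : Differentiable ℝ φ := hφ.differentiable (by norm_num)
  have hφd2 : Differentiable ℝ (fun w => fderiv ℝ φ w) :=
    (hφ.fderiv_right (m := 1) (by norm_num)).differentiable (by norm_num)
  have hlipF : ∀ a b : Ed d, ‖fderiv ℝ φ a - fderiv ℝ φ b‖ ≤ M2 * ‖a - b‖ :=
    lip_of_bound hφd2 hb2
  set ψ : Ed d → ℝ := fun w => φ w - fderiv ℝ φ x w with hψ
  have hψd : ∀ w, HasFDerivAt ψ (fderiv ℝ φ w - fderiv ℝ φ x) w := fun w =>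
    ((hφd w).hasFDerivAt).sub (fderiv ℝ φ x).hasFDerivAt
  have hkey : ‖ψ (x+z) - ψ x‖ ≤ (M2 * ‖z‖) * ‖(x+z) - x‖ := by
    refine Convex.norm_image_sub_le_of_norm_fderiv_le
      (fun w _ => (hψd w).differentiableAt) (fun w hw => ?_)
      (convex_closedBall x ‖z‖) (mem_closedBall_self (norm_nonneg z)) ?_
    · rw [(hψd w).fderiv]
      calc ‖fderiv ℝ φ w - fderiv ℝ φ x‖ ≤ M2 * ‖w - x‖ := hlipF w x
        _ ≤ M2 * ‖z‖ := by
            have hM2 : 0 ≤ M2 := le_trans (ContinuousLinearMap.opNorm_nonneg _) (hb2 x)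
            have := mem_closedBall_iff_norm.1 hw
            exact mul_le_mul_of_nonneg_left this hM2
    · rw [mem_closedBall_iff_norm, add_sub_cancel_left]
  have he1 : ψ (x+z) - ψ x = φ (x+z) - φ x - fderiv ℝ φ x z := by
    simp only [hψ]
    have : fderiv ℝ φ x (x+z) - fderiv ℝ φ x x = fderiv ℝ φ x z := by
      rw [← map_sub, add_sub_cancel_left]
    rw [← this]; ring
  rw [he1] at hkey
  rw [Real.norm_eq_abs] at hkey
  calc |φ (x+z) - φ x - fderiv ℝ φ x z| ≤ (M2 * ‖z‖) * ‖(x+z) - x‖ := hkey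
    _ = M2 * (‖z‖ * ‖z‖) := by rw [add_sub_cancel_left]; ring

lemma secdiff (hφ : ContDiff ℝ 2 φ)
    (hb2 : ∀ x, ‖fderiv ℝ (fun z => fderiv ℝ φ z) x‖ ≤ M2) (x y z : Ed d) :
    |(φ (x+z) - φ x - fderiv ℝ φ x z) - (φ (y+z) - φ y - fderiv ℝ φ y z)| ≤
      2 * M2 * ‖x - y‖ * ‖z‖ := by
  have hφd : Differentiable ℝ φ := hφ.differentiable (by norm_num)
  have hφd2 : Differentiable ℝ (fun w => fderiv ℝ φ w) :=
    (hφ.fderiv_right (m := 1) (by norm_num)).differentiable (by norm_num)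
  have hM2 : 0 ≤ M2 := le_trans (ContinuousLinearMap.opNorm_nonneg _) (hb2 x)
  have hlipF : ∀ a b : Ed d, ‖fderiv ℝ φ a - fderiv ℝ φ b‖ ≤ M2 * ‖a - b‖ :=
    lip_of_bound hφd2 hb2
  set v : Ed d := x - y with hv
  set η : Ed d → ℝ := fun w => φ (w + v) - φ w with hη
  have hηd : ∀ w, HasFDerivAt η (fderiv ℝ φ (w+v) - fderiv ℝ φ w) w := by
    intro w
    have h1 : HasFDerivAt (fun w : Ed d => φ (w + v)) (fderiv ℝ φ (w+v)) w := by
      have := ((hφd (w+v)).hasFDerivAt).comp w ((hasFDerivAt_id w).add_const v)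
      simpa [Function.comp_def] using this
    exact h1.sub (hφd w).hasFDerivAt
  have hηlip : ∀ a b : Ed d, ‖η a - η b‖ ≤ (M2 * ‖v‖) * ‖a - b‖ := by
    intro a b
    refine Convex.norm_image_sub_le_of_norm_fderiv_le
      (fun w _ => (hηd w).differentiableAt) (fun w _ => ?_) convex_univ
      (mem_univ b) (mem_univ a)
    rw [(hηd w).fderiv]
    calc ‖fderiv ℝ φ (w+v) - fderiv ℝ φ w‖ ≤ M2 * ‖(w+v) - w‖ := hlipF _ _
      _ = M2 * ‖v‖ := by rw [add_sub_cancel_left]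
  have hgoal : (φ (x+z) - φ x - fderiv ℝ φ x z) - (φ (y+z) - φ y - fderiv ℝ φ y z)
      = (η (y+z) - η y) - (fderiv ℝ φ x - fderiv ℝ φ y) z := by
    simp only [hη, hv, ContinuousLinearMap.sub_apply]
    have h1 : y + z + (x - y) = x + z := by abel
    have h2 : y + (x - y) = x := by abel
    rw [h1, h2]; ring
  rw [hgoal]
  have h3 : ‖(fderiv ℝ φ x - fderiv ℝ φ y) z‖ ≤ (M2 * ‖x - y‖) * ‖z‖ := by
    calc ‖(fderiv ℝ φ x - fderiv ℝ φ y) z‖ ≤ ‖fderiv ℝ φ x - fderiv ℝ φ y‖ * ‖z‖ :=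
        (fderiv ℝ φ x - fderiv ℝ φ y).le_opNorm z
      _ ≤ (M2 * ‖x - y‖) * ‖z‖ :=
        mul_le_mul_of_nonneg_right (hlipF x y) (norm_nonneg z)
  have h4 : ‖η (y+z) - η y‖ ≤ (M2 * ‖v‖) * ‖z‖ := by
    calc ‖η (y+z) - η y‖ ≤ (M2 * ‖v‖) * ‖(y+z) - y‖ := hηlip _ _
      _ = (M2 * ‖v‖) * ‖z‖ := by rw [add_sub_cancel_left]
  calc |(η (y+z) - η y) - (fderiv ℝ φ x - fderiv ℝ φ y) z|
      ≤ |η (y+z) - η y| + |(fderiv ℝ φ x - fderiv ℝ φ y) z| := abs_sub _ _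
    _ ≤ (M2 * ‖v‖) * ‖z‖ + (M2 * ‖x - y‖) * ‖z‖ := by
        rw [← Real.norm_eq_abs, ← Real.norm_eq_abs]
        exact add_le_add h4 h3
    _ = 2 * M2 * ‖x - y‖ * ‖z‖ := by rw [hv]; ring

end PhiFacts

lemma le_mul_min {g A a b : ℝ} (h1 : g ≤ A*a) (h2 : g ≤ A*b) : g ≤ A * min a b := by
  rcases le_total a b with h | h
  · rw [min_eq_left h]; exact h1
  · rw [min_eq_right h]; exact h2

lemma sInf_sSup_est {α : Type*} (S : Set α) (f g : α → ℝ) (E M : ℝ) (hE : 0 ≤ E)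
    (hbf : ∀ a ∈ S, |f a| ≤ M) (hbg : ∀ a ∈ S, |g a| ≤ M)
    (hfg : ∀ a ∈ S, |f a - g a| ≤ E) :
    |sInf (f '' S) - sInf (g '' S)| ≤ E ∧ |sSup (f '' S) - sSup (g '' S)| ≤ E := by
  rcases S.eq_empty_or_nonempty with rfl | hS
  · simp [Real.sInf_empty, Real.sSup_empty, hE]
  have bddB : ∀ u : α → ℝ, (∀ a ∈ S, |u a| ≤ M) → BddBelow (u '' S) := by
    intro u hu; refine ⟨-M, ?_⟩; rintro v ⟨a, ha, rfl⟩; exact (abs_le.1 (hu a ha)).1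
  have bddA : ∀ u : α → ℝ, (∀ a ∈ S, |u a| ≤ M) → BddAbove (u '' S) := by
    intro u hu; refine ⟨M, ?_⟩; rintro v ⟨a, ha, rfl⟩; exact (abs_le.1 (hu a ha)).2
  have keyI : ∀ u v : α → ℝ, BddBelow (u '' S) → (∀ a ∈ S, |u a - v a| ≤ E) →
      sInf (u '' S) - E ≤ sInf (v '' S) := by
    intro u v hbd huv
    refine le_csInf (hS.image v) ?_
    rintro b ⟨a, ha, rfl⟩
    have h1 : sInf (u '' S) ≤ u a := csInf_le hbd (mem_image_of_mem u ha)
    have h2 : u a - v a ≤ E := (abs_le.1 (huv a ha)).2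
    linarith
  have keyS : ∀ u v : α → ℝ, BddAbove (v '' S) → (∀ a ∈ S, |u a - v a| ≤ E) →
      sSup (u '' S) ≤ sSup (v '' S) + E := by
    intro u v hbd huv
    refine csSup_le (hS.image u) ?_
    rintro b ⟨a, ha, rfl⟩
    have h1 : v a ≤ sSup (v '' S) := le_csSup hbd (mem_image_of_mem v ha)
    have h2 : u a - v a ≤ E := (abs_le.1 (huv a ha)).2
    linarith
  have hgf : ∀ a ∈ S, |g a - f a| ≤ E := fun a ha => by
    rw [abs_sub_comm]; exact hfg a ha
  constructor
  · rw [abs_sub_le_iff]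
    exact ⟨by linarith [keyI f g (bddB f hbf) hfg],
           by linarith [keyI g f (bddB g hbg) hgf]⟩
  · rw [abs_sub_le_iff]
    exact ⟨by linarith [keyS f g (bddA g hbg) hfg],
           by linarith [keyS g f (bddA f hbf) hgf]⟩

/-- integrability of `w z * K z` on an annulus, plus vanishing of the integral
under the cancellation hypothesis. -/
lemma zone_cancel {d : ℕ} {s Lam : ℝ} (hs0 : 0 < s) {K : Ed d → ℝ}
    (hKm : Measurable K) (hK0 : ∀ y, 0 ≤ K y)
    (hKu : ∀ r : ℝ, 0 < r →
      ∫⁻ y in ball (0 : Ed d) (2*r) \ ball 0 r, ENNReal.ofReal (K y) ≤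
        ENNReal.ofReal (Lam * r ^ (-(2*s))))
    (hKc : ∀ r : ℝ, 0 < r →
      (∫ y in ball (0 : Ed d) (2*r) \ ball 0 r, K y • y) = (0 : Ed d))
    (w : Ed d →L[ℝ] ℝ) (t : ℝ) (ht : 0 < t) (m : ℕ) :
    IntegrableOn (fun z => w z * K z) (ball (0:Ed d) (2^m * t) \ ball 0 t) ∧
      (∫ z in ball (0:Ed d) (2^m * t) \ ball 0 t, w z * K z) = 0 := by
  -- first, integrability and vanishing on a single annulus
  have ann : ∀ r : ℝ, 0 < r →
      IntegrableOn (fun z => K z • z) (ball (0:Ed d) (2*r) \ ball 0 r) := by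
    intro r hr
    constructor
    · exact ((hKm.smul measurable_id).aestronglyMeasurable).restrict
    · rw [hasFiniteIntegral_iff_norm]
      have hb : ∀ z ∈ ball (0:Ed d) (2*r) \ ball 0 r,
          ENNReal.ofReal ‖K z • z‖ ≤ ENNReal.ofReal (2*r) * ENNReal.ofReal (K z) := by
        intro z hz
        rw [← ENNReal.ofReal_mul (by linarith)]
        apply ENNReal.ofReal_le_ofReal
        rw [norm_smul, Real.norm_eq_abs, abs_of_nonneg (hK0 z)]
        calc K z * ‖z‖ ≤ K z * (2*r) :=
            mul_le_mul_of_nonneg_left (le_of_lt (mem_ball_zero_iff.1 hz.1)) (hK0 z)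
          _ = 2*r * K z := by ring
      calc ∫⁻ z in ball (0:Ed d) (2*r) \ ball 0 r, ENNReal.ofReal ‖K z • z‖
          ≤ ∫⁻ z in ball (0:Ed d) (2*r) \ ball 0 r,
            ENNReal.ofReal (2*r) * ENNReal.ofReal (K z) :=
            setLIntegral_mono (measurable_const.mul hKm.ennreal_ofReal) hb
        _ = ENNReal.ofReal (2*r) * ∫⁻ z in ball (0:Ed d) (2*r) \ ball 0 r,
            ENNReal.ofReal (K z) := lintegral_const_mul _ hKm.ennreal_ofReal
        _ ≤ ENNReal.ofReal (2*r) * ENNReal.ofReal (Lam * r ^ (-(2*s))) :=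
            mul_le_mul_right (hKu r hr) _
        _ < ⊤ := ENNReal.mul_lt_top ENNReal.ofReal_lt_top ENNReal.ofReal_lt_top
  have annw : ∀ r : ℝ, 0 < r →
      IntegrableOn (fun z => w z * K z) (ball (0:Ed d) (2*r) \ ball 0 r) ∧
      (∫ z in ball (0:Ed d) (2*r) \ ball 0 r, w z * K z) = 0 := by
    intro r hr
    have h1 : IntegrableOn (fun z => w z * K z) (ball (0:Ed d) (2*r) \ ball 0 r) := by
      have : (fun z : Ed d => w z * K z) = fun z => w (K z • z) := by
        funext z; rw [w.map_smul, smul_eq_mul]; ring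
      rw [this]
      exact (w.integrable_comp (ann r hr))
    refine ⟨h1, ?_⟩
    have : (fun z : Ed d => w z * K z) = fun z => w (K z • z) := by
      funext z; rw [w.map_smul, smul_eq_mul]; ring
    rw [this, ContinuousLinearMap.integral_comp_comm w (ann r hr), hKc r hr, map_zero]
  -- induction on m
  induction m with
  | zero =>
    simp only [pow_zero, one_mul, diff_self]
    constructor
    · exact integrableOn_empty
    · simp
  | succ n ih =>
    have hsub1 : ball (0:Ed d) (2^n * t) ⊆ ball 0 (2^(n+1) * t) := by
      apply ball_subset_ball
      have : (2:ℝ)^n ≤ 2^(n+1) := by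
        apply pow_le_pow_right₀ (by norm_num); omega
      nlinarith
    have hsub2 : ball (0:Ed d) t ⊆ ball 0 (2^n * t) := by
      apply ball_subset_ball
      nlinarith [one_le_pow₀ (show (1:ℝ) ≤ 2 by norm_num) (n := n)]
    have hun : ball (0:Ed d) (2^(n+1) * t) \ ball 0 t =
        (ball (0:Ed d) (2^(n+1) * t) \ ball 0 (2^n * t)) ∪
          (ball (0:Ed d) (2^n * t) \ ball 0 t) :=
      (diff_union_diff_cancel hsub1 hsub2).symm
    have hdisj : Disjoint (ball (0:Ed d) (2^(n+1) * t) \ ball 0 (2^n * t))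
        (ball (0:Ed d) (2^n * t) \ ball 0 t) := by
      refine Disjoint.mono_right diff_subset ?_
      exact disjoint_sdiff_left
    have hannset : ball (0:Ed d) (2^(n+1) * t) \ ball 0 (2^n * t) =
        ball (0:Ed d) (2*(2^n * t)) \ ball 0 (2^n * t) := by
      rw [show (2:ℝ)^(n+1) * t = 2*(2^n * t) by rw [pow_succ]; ring]
    have hr : (0:ℝ) < 2^n * t := by positivity
    have hann := annw (2^n * t) hr
    rw [hun]
    constructor
    · apply IntegrableOn.union
      · rw [hannset]; exact hann.1
      · exact ih.1
    · rw [setIntegral_union hdisj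
        (measurableSet_ball.diff measurableSet_ball) ?_ ih.1]
      · rw [ih.2, add_zero, hannset, hann.2]
      · rw [hannset]; exact hann.1


section Main
variable {d : ℕ} {s Lam C R : ℝ} {φ : Ed d → ℝ}

lemma sup_bound (hd : 1 ≤ d) (hC : 0 < C) (hR : 0 < R)
    (hφd : Differentiable ℝ φ)
    (hgrad : ∀ x, ‖fderiv ℝ φ x‖ ≤ C / R)
    (hsupp : Function.support φ ⊆ closedBall (0 : Ed d) R) (a : Ed d) :
    |φ a| ≤ 3 * C := by
  have hzero : ∀ b : Ed d, R < ‖b‖ → φ b = 0 := by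
    intro b hb
    by_contra h
    have := mem_closedBall_zero_iff.1 (hsupp (Function.mem_support.2 h))
    linarith
  rcases le_or_gt ‖a‖ R with hle | hgt
  · set e : Ed d := EuclideanSpace.single (⟨0, hd⟩ : Fin d) (1:ℝ) with he
    have hne : ‖e‖ = 1 := by rw [he, EuclideanSpace.norm_single]; norm_num
    set b : Ed d := a + (3*R) • e with hb
    have hnb : R < ‖b‖ := by
      have h1 : ‖(3*R) • e‖ = 3*R := by
        rw [norm_smul, hne, Real.norm_eq_abs, abs_of_pos (by linarith)]; ring
      have h2 : ‖(3*R) • e‖ ≤ ‖b‖ + ‖a‖ := by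
        calc ‖(3*R) • e‖ = ‖b - a‖ := by rw [hb]; congr 1; abel
          _ ≤ ‖b‖ + ‖a‖ := norm_sub_le _ _
      linarith
    have hfb : φ b = 0 := hzero b hnb
    have hl : ‖φ a - φ b‖ ≤ (C/R) * ‖a - b‖ := lip_of_bound hφd hgrad a b
    have hab : ‖a - b‖ = 3*R := by
      rw [hb, show a - (a + (3*R) • e) = -((3*R) • e) by abel, norm_neg,
        norm_smul, hne, Real.norm_eq_abs, abs_of_pos (by linarith)]; ring
    rw [hfb, sub_zero, Real.norm_eq_abs, hab] at hl
    calc |φ a| ≤ (C/R) * (3*R) := hl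
      _ = 3*C := by field_simp
  · rw [hzero a hgt]; simp; positivity

lemma caseA_point (hs0 : 0 < s) (hs2 : 2*s < 1) (hLam : 0 < Lam) (hC : 0 < C)
    (hR : 0 < R) (hd : 1 ≤ d) (hφ : ContDiff ℝ 2 φ)
    (hgrad : ∀ x, ‖fderiv ℝ φ x‖ ≤ C / R)
    (hsupp : Function.support φ ⊆ closedBall (0 : Ed d) R)
    {K : Ed d → ℝ} (hKm : Measurable K) (hK0 : ∀ y, 0 ≤ K y)
    (hKu : ∀ r : ℝ, 0 < r →
      ∫⁻ y in ball (0 : Ed d) (2*r) \ ball 0 r, ENNReal.ofReal (K y) ≤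
        ENNReal.ofReal (Lam * r ^ (-(2*s)))) (x : Ed d) :
    Integrable (fun z => (φ (x+z) - φ x) * K z) ∧
      |∫ z, (φ (x+z) - φ x) * K z| ≤
        (C/R) * Lam * dyC s 1 0 * (6*R) ^ ((1:ℝ) - 2*s) := by
  have hφd : Differentiable ℝ φ := hφ.differentiable (by norm_num)
  have hgm : Measurable (fun z : Ed d => φ (x+z) - φ x) :=
    ((hφ.continuous.comp (continuous_const.add continuous_id)).sub
      continuous_const).measurable
  have hgb : ∀ z : Ed d, |φ (x+z) - φ x| ≤
      (C/R) * min (‖z‖ ^ (1:ℝ)) ((6*R) ^ ((1:ℝ)-0) * ‖z‖ ^ (0:ℝ)) := by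
    intro z
    simp only [Real.rpow_one, Real.rpow_zero, sub_zero, mul_one]
    apply le_mul_min
    · have := lip_of_bound hφd hgrad (x+z) x
      rw [add_sub_cancel_left, Real.norm_eq_abs] at this
      exact this
    · calc |φ (x+z) - φ x| ≤ |φ (x+z)| + |φ x| := abs_sub _ _
        _ ≤ 3*C + 3*C := add_le_add (sup_bound hd hC hR hφd hgrad hsupp _)
            (sup_bound hd hC hR hφd hgrad hsupp _)
        _ = (C/R) * (6*R) := by field_simp; ring
  exact bound_transfer hs0 hLam hKm hK0 hKu (le_refl 0) (by linarith) (by linarith)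
    (by positivity) (by linarith) hgm hgb

lemma caseA_diff (hs0 : 0 < s) (hs2 : 2*s < 1) (hLam : 0 < Lam) (hC : 0 < C)
    (hR : 0 < R) (hφ : ContDiff ℝ 2 φ)
    (hgrad : ∀ x, ‖fderiv ℝ φ x‖ ≤ C / R)
    {K : Ed d → ℝ} (hKm : Measurable K) (hK0 : ∀ y, 0 ≤ K y)
    (hKu : ∀ r : ℝ, 0 < r →
      ∫⁻ y in ball (0 : Ed d) (2*r) \ ball 0 r, ENNReal.ofReal (K y) ≤
        ENNReal.ofReal (Lam * r ^ (-(2*s)))) (x y : Ed d) (hxy : 0 < ‖x - y‖) :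
    |∫ z, ((φ (x+z) - φ x) - (φ (y+z) - φ y)) * K z| ≤
      2*(C/R) * Lam * dyC s 1 0 * ‖x - y‖ ^ ((1:ℝ) - 2*s) := by
  have hφd : Differentiable ℝ φ := hφ.differentiable (by norm_num)
  have hgm : Measurable (fun z : Ed d => (φ (x+z) - φ x) - (φ (y+z) - φ y)) := by
    apply Continuous.measurable
    exact ((hφ.continuous.comp (continuous_const.add continuous_id)).sub
      continuous_const).sub
      ((hφ.continuous.comp (continuous_const.add continuous_id)).sub
      continuous_const)
  have hgb : ∀ z : Ed d, |(φ (x+z) - φ x) - (φ (y+z) - φ y)| ≤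
      (2*(C/R)) * min (‖z‖ ^ (1:ℝ)) (‖x-y‖ ^ ((1:ℝ)-0) * ‖z‖ ^ (0:ℝ)) := by
    intro z
    simp only [Real.rpow_one, Real.rpow_zero, sub_zero, mul_one]
    apply le_mul_min
    · have h1 := lip_of_bound hφd hgrad (x+z) x
      have h2 := lip_of_bound hφd hgrad (y+z) y
      rw [add_sub_cancel_left, Real.norm_eq_abs] at h1 h2
      calc |(φ (x+z) - φ x) - (φ (y+z) - φ y)|
          ≤ |φ (x+z) - φ x| + |φ (y+z) - φ y| := abs_sub _ _
        _ ≤ (C/R)*‖z‖ + (C/R)*‖z‖ := add_le_add h1 h2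
        _ = 2*(C/R)*‖z‖ := by ring
    · have h1 := lip_of_bound hφd hgrad (x+z) (y+z)
      have h2 := lip_of_bound hφd hgrad x y
      rw [Real.norm_eq_abs] at h1 h2
      have he : (x+z) - (y+z) = x - y := by abel
      rw [he] at h1
      calc |(φ (x+z) - φ x) - (φ (y+z) - φ y)|
          = |(φ (x+z) - φ (y+z)) - (φ x - φ y)| := by ring_nf
        _ ≤ |φ (x+z) - φ (y+z)| + |φ x - φ y| := abs_sub _ _
        _ ≤ (C/R)*‖x-y‖ + (C/R)*‖x-y‖ := add_le_add h1 h2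
        _ = 2*(C/R)*‖x-y‖ := by ring
  exact (bound_transfer hs0 hLam hKm hK0 hKu (le_refl 0) (by linarith) (by linarith)
    (by positivity) hxy hgm hgb).2

end Main


section MainA
variable {d : ℕ} {s Lam C : ℝ}

lemma main_caseA (hd : 1 ≤ d) (hs : s ∈ Ioo (0:ℝ) 1) (hslt : s < 1/2)
    (hLam : 0 < Lam) (hC : 0 < C) (lam ρ : ℝ) (R : ℝ) (hR : 0 < R)
    (φ : Ed d → ℝ) (hφ : ContDiff ℝ 2 φ)
    (hsupp : Function.support φ ⊆ closedBall (0 : Ed d) R)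
    (hgrad : ∀ x, ‖fderiv ℝ φ x‖ ≤ C / R) (x y : Ed d) :
    |pucciInf d s lam Lam ρ φ x - pucciInf d s lam Lam ρ φ y| ≤
        (2*C*Lam*dyC s 1 0) / R ^ (2*s) * (‖x - y‖ / R) ^ ((1:ℝ)-2*s) ∧
      |pucciSup d s lam Lam ρ φ x - pucciSup d s lam Lam ρ φ y| ≤
        (2*C*Lam*dyC s 1 0) / R ^ (2*s) * (‖x - y‖ / R) ^ ((1:ℝ)-2*s) := by
  have hs0 : 0 < s := hs.1
  have hs2 : 2*s < 1 := by linarith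
  have hdy := dyC_pos (s := s) (p := 1) (q := 0) (by linarith) (by linarith)
  by_cases hxy : x = y
  · subst hxy
    simp only [sub_self, abs_zero]
    have h0 : 0 ≤ (2*C*Lam*dyC s 1 0) / R ^ (2*s) * (‖(0:Ed d)‖ / R) ^ ((1:ℝ)-2*s) := by
      apply mul_nonneg (div_nonneg (by positivity) (Real.rpow_nonneg hR.le _))
      exact Real.rpow_nonneg (div_nonneg (norm_nonneg _) hR.le) _
    exact ⟨h0, h0⟩
  have hnorm : 0 < ‖x - y‖ := by
    rw [norm_pos_iff]; exact sub_ne_zero.2 hxy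
  set E := (2*C*Lam*dyC s 1 0) / R ^ (2*s) * (‖x - y‖ / R) ^ ((1:ℝ)-2*s) with hE
  have hRR : R ^ (2*s) * R ^ ((1:ℝ)-2*s) = R := by
    rw [← Real.rpow_add hR, show 2*s + ((1:ℝ)-2*s) = 1 by ring, Real.rpow_one]
  have hEeq : E = 2*(C/R) * Lam * dyC s 1 0 * ‖x - y‖ ^ ((1:ℝ)-2*s) := by
    rw [hE, Real.div_rpow hnorm.le hR.le,
      show (2*C*Lam*dyC s 1 0) / R ^ (2*s) * (‖x - y‖^((1:ℝ)-2*s) / R ^ ((1:ℝ)-2*s))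
        = (2*C*Lam*dyC s 1 0) * ‖x - y‖^((1:ℝ)-2*s) / (R^(2*s) * R^((1:ℝ)-2*s)) by
          ring, hRR]
    ring
  have hE0 : 0 ≤ E := by
    rw [hEeq]
    have := Real.rpow_nonneg hnorm.le ((1:ℝ)-2*s)
    positivity
  set M := (C/R) * Lam * dyC s 1 0 * (6*R) ^ ((1:ℝ) - 2*s) with hM
  set S := KernelClass d s lam Lam ρ with hS
  have hrep : ∀ (K : Ed d → ℝ) (w : Ed d), opL d s K φ w = ∫ z, (φ (w+z) - φ w) * K z := by
    intro K w
    unfold opL incr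
    simp only [if_pos hslt]
  have hptK : ∀ K ∈ S, ∀ w : Ed d, Integrable (fun z => (φ (w+z) - φ w) * K z) ∧
      |∫ z, (φ (w+z) - φ w) * K z| ≤ M := by
    rintro K ⟨hKm, hK0, -, hKu, -⟩ w
    exact caseA_point hs0 hs2 hLam hC hR hd hφ hgrad hsupp hKm hK0 hKu w
  have hfg : ∀ K ∈ S, |opL d s K φ x - opL d s K φ y| ≤ E := by
    intro K hK
    have hix := (hptK K hK x).1
    have hiy := (hptK K hK y).1
    obtain ⟨hKm, hK0, -, hKu, -⟩ := hK
    have hsub : ∫ z, ((φ (x+z) - φ x) - (φ (y+z) - φ y)) * K z =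
        (∫ z, (φ (x+z) - φ x) * K z) - ∫ z, (φ (y+z) - φ y) * K z := by
      rw [← integral_sub hix hiy]
      congr 1; funext z; ring
    rw [hrep K x, hrep K y, ← hsub, hEeq]
    exact caseA_diff hs0 hs2 hLam hC hR hφ hgrad hKm hK0 hKu x y hnorm
  have hfM : ∀ K ∈ S, |opL d s K φ x| ≤ M := by
    intro K hK; rw [hrep]; exact (hptK K hK x).2
  have hgM : ∀ K ∈ S, |opL d s K φ y| ≤ M := by
    intro K hK; rw [hrep]; exact (hptK K hK y).2
  exact sInf_sSup_est S (fun K => opL d s K φ x) (fun K => opL d s K φ y) E M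
    hE0 hfM hgM hfg

end MainA


section MainB
variable {d : ℕ} {s Lam C R : ℝ} {φ : Ed d → ℝ}

lemma rpow_two_eq (x : ℝ) : x ^ (2:ℝ) = x * x := by
  rw [show (2:ℝ) = ((2:ℕ):ℝ) by norm_num, Real.rpow_natCast]; ring

lemma caseB_point (hs1 : 2*s < 2) (hs2 : 1 < 2*s) (hLam : 0 < Lam) (hC : 0 < C)
    (hR : 0 < R) (hφ : ContDiff ℝ 2 φ)
    (hgrad : ∀ x, ‖fderiv ℝ φ x‖ ≤ C / R)
    (hhess : ∀ x, ‖fderiv ℝ (fun z => fderiv ℝ φ z) x‖ ≤ C / R ^ 2)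
    {K : Ed d → ℝ} (hKm : Measurable K) (hK0 : ∀ y, 0 ≤ K y)
    (hKu : ∀ r : ℝ, 0 < r →
      ∫⁻ y in ball (0 : Ed d) (2*r) \ ball 0 r, ENNReal.ofReal (K y) ≤
        ENNReal.ofReal (Lam * r ^ (-(2*s)))) (x : Ed d) :
    Integrable (fun z => (φ (x+z) - φ x - fderiv ℝ φ x z) * K z) ∧
      |∫ z, (φ (x+z) - φ x - fderiv ℝ φ x z) * K z| ≤
        2*(C/R^2) * Lam * dyC s 2 1 * R ^ ((2:ℝ) - 2*s) := by
  have hs0 : 0 < s := by linarith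
  have hφd : Differentiable ℝ φ := hφ.differentiable (by norm_num)
  have hgm : Measurable (fun z : Ed d => φ (x+z) - φ x - fderiv ℝ φ x z) := by
    apply Continuous.measurable
    exact ((hφ.continuous.comp (continuous_const.add continuous_id)).sub
      continuous_const).sub (fderiv ℝ φ x).continuous
  have hgb : ∀ z : Ed d, |φ (x+z) - φ x - fderiv ℝ φ x z| ≤
      (2*(C/R^2)) * min (‖z‖ ^ (2:ℝ)) (R ^ ((2:ℝ)-1) * ‖z‖ ^ (1:ℝ)) := by
    intro z
    rw [show ((2:ℝ)-1) = 1 by norm_num]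
    simp only [Real.rpow_one]
    apply le_mul_min
    · rw [rpow_two_eq]
      have h1 := taylor1 hφ hhess x z
      have hnn : (0:ℝ) ≤ C/R^2*(‖z‖*‖z‖) := by positivity
      linarith
    · have h1 := lip_of_bound hφd hgrad (x+z) x
      rw [add_sub_cancel_left, Real.norm_eq_abs] at h1
      have h2 : |fderiv ℝ φ x z| ≤ (C/R) * ‖z‖ := by
        calc |fderiv ℝ φ x z| = ‖fderiv ℝ φ x z‖ := (Real.norm_eq_abs _).symm
          _ ≤ ‖fderiv ℝ φ x‖ * ‖z‖ := (fderiv ℝ φ x).le_opNorm z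
          _ ≤ (C/R) * ‖z‖ := mul_le_mul_of_nonneg_right (hgrad x) (norm_nonneg z)
      have he : 2*(C/R^2) * (R * ‖z‖) = 2*((C/R)*‖z‖) := by
        field_simp
      rw [he]
      calc |φ (x+z) - φ x - fderiv ℝ φ x z|
          ≤ |φ (x+z) - φ x| + |fderiv ℝ φ x z| := abs_sub _ _
        _ ≤ (C/R)*‖z‖ + (C/R)*‖z‖ := add_le_add h1 h2
        _ = 2*((C/R)*‖z‖) := by ring
  exact bound_transfer hs0 hLam hKm hK0 hKu (by norm_num) (by linarith)
    (by linarith) (by positivity) hR hgm hgb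

lemma caseB_diff (hs1 : 2*s < 2) (hs2 : 1 < 2*s) (hLam : 0 < Lam) (hC : 0 < C)
    (hR : 0 < R) (hφ : ContDiff ℝ 2 φ)
    (hhess : ∀ x, ‖fderiv ℝ (fun z => fderiv ℝ φ z) x‖ ≤ C / R ^ 2)
    {K : Ed d → ℝ} (hKm : Measurable K) (hK0 : ∀ y, 0 ≤ K y)
    (hKu : ∀ r : ℝ, 0 < r →
      ∫⁻ y in ball (0 : Ed d) (2*r) \ ball 0 r, ENNReal.ofReal (K y) ≤
        ENNReal.ofReal (Lam * r ^ (-(2*s)))) (x y : Ed d) (hxy : 0 < ‖x - y‖) :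
    |∫ z, ((φ (x+z) - φ x - fderiv ℝ φ x z) - (φ (y+z) - φ y - fderiv ℝ φ y z)) * K z| ≤
      2*(C/R^2) * Lam * dyC s 2 1 * ‖x - y‖ ^ ((2:ℝ) - 2*s) := by
  have hs0 : 0 < s := by linarith
  have hφd : Differentiable ℝ φ := hφ.differentiable (by norm_num)
  have hgm : Measurable (fun z : Ed d =>
      (φ (x+z) - φ x - fderiv ℝ φ x z) - (φ (y+z) - φ y - fderiv ℝ φ y z)) := by
    apply Continuous.measurable
    apply Continuous.sub
    · exact ((hφ.continuous.comp (continuous_const.add continuous_id)).sub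
        continuous_const).sub (fderiv ℝ φ x).continuous
    · exact ((hφ.continuous.comp (continuous_const.add continuous_id)).sub
        continuous_const).sub (fderiv ℝ φ y).continuous
  have hgb : ∀ z : Ed d,
      |(φ (x+z) - φ x - fderiv ℝ φ x z) - (φ (y+z) - φ y - fderiv ℝ φ y z)| ≤
      (2*(C/R^2)) * min (‖z‖ ^ (2:ℝ)) (‖x-y‖ ^ ((2:ℝ)-1) * ‖z‖ ^ (1:ℝ)) := by
    intro z
    rw [show ((2:ℝ)-1) = 1 by norm_num]
    simp only [Real.rpow_one]
    apply le_mul_min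
    · rw [rpow_two_eq]
      have h1 := taylor1 hφ hhess x z
      have h2 := taylor1 hφ hhess y z
      have h3 := abs_sub (φ (x+z) - φ x - fderiv ℝ φ x z)
        (φ (y+z) - φ y - fderiv ℝ φ y z)
      have hnn : (0:ℝ) ≤ C/R^2*(‖z‖*‖z‖) := by positivity
      linarith
    · have h4 := secdiff hφ hhess x y z
      have he : 2*(C/R^2) * (‖x-y‖ * ‖z‖) = 2*(C/R^2) * ‖x-y‖ * ‖z‖ := by ring
      rw [he]; exact h4
  exact (bound_transfer hs0 hLam hKm hK0 hKu (by norm_num) (by linarith)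
    (by linarith) (by positivity) hxy hgm hgb).2

lemma main_caseB (hs : s ∈ Ioo (0:ℝ) 1) (hsgt : 1/2 < s)
    (hLam : 0 < Lam) (hC : 0 < C) (lam ρ : ℝ) (R : ℝ) (hR : 0 < R)
    (φ : Ed d → ℝ) (hφ : ContDiff ℝ 2 φ)
    (hgrad : ∀ x, ‖fderiv ℝ φ x‖ ≤ C / R)
    (hhess : ∀ x, ‖fderiv ℝ (fun z => fderiv ℝ φ z) x‖ ≤ C / R ^ 2) (x y : Ed d) :
    |pucciInf d s lam Lam ρ φ x - pucciInf d s lam Lam ρ φ y| ≤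
        (2*C*Lam*dyC s 2 1) / R ^ (2*s) * (‖x - y‖ / R) ^ ((2:ℝ)-2*s) ∧
      |pucciSup d s lam Lam ρ φ x - pucciSup d s lam Lam ρ φ y| ≤
        (2*C*Lam*dyC s 2 1) / R ^ (2*s) * (‖x - y‖ / R) ^ ((2:ℝ)-2*s) := by
  have hs1 : 2*s < 2 := by have := hs.2; linarith
  have hs2 : 1 < 2*s := by linarith
  have hdy := dyC_pos (s := s) (p := 2) (q := 1) (by linarith) (by linarith)
  by_cases hxy : x = y
  · subst hxy
    simp only [sub_self, abs_zero]
    have h0 : 0 ≤ (2*C*Lam*dyC s 2 1) / R ^ (2*s) * (‖(0:Ed d)‖ / R) ^ ((2:ℝ)-2*s) := by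
      apply mul_nonneg (div_nonneg (by positivity) (Real.rpow_nonneg hR.le _))
      exact Real.rpow_nonneg (div_nonneg (norm_nonneg _) hR.le) _
    exact ⟨h0, h0⟩
  have hnorm : 0 < ‖x - y‖ := by
    rw [norm_pos_iff]; exact sub_ne_zero.2 hxy
  set E := (2*C*Lam*dyC s 2 1) / R ^ (2*s) * (‖x - y‖ / R) ^ ((2:ℝ)-2*s) with hE
  have hRR : R ^ (2*s) * R ^ ((2:ℝ)-2*s) = R ^ 2 := by
    rw [← Real.rpow_add hR, show 2*s + ((2:ℝ)-2*s) = ((2:ℕ):ℝ) by push_cast; ring,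
      Real.rpow_natCast]
  have hEeq : E = 2*(C/R^2) * Lam * dyC s 2 1 * ‖x - y‖ ^ ((2:ℝ)-2*s) := by
    rw [hE, Real.div_rpow hnorm.le hR.le,
      show (2*C*Lam*dyC s 2 1) / R ^ (2*s) * (‖x - y‖^((2:ℝ)-2*s) / R ^ ((2:ℝ)-2*s))
        = (2*C*Lam*dyC s 2 1) * ‖x - y‖^((2:ℝ)-2*s) / (R^(2*s) * R^((2:ℝ)-2*s)) by
          ring, hRR]
    ring
  have hE0 : 0 ≤ E := by
    rw [hEeq]
    have := Real.rpow_nonneg hnorm.le ((2:ℝ)-2*s)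
    positivity
  set M := 2*(C/R^2) * Lam * dyC s 2 1 * R ^ ((2:ℝ) - 2*s) with hM
  set S := KernelClass d s lam Lam ρ with hS
  have hns1 : ¬ (s < 1/2) := by push_neg; linarith
  have hns2 : ¬ (s = 1/2) := by intro hcon; rw [hcon] at hsgt; norm_num at hsgt
  have hrep : ∀ (K : Ed d → ℝ) (w : Ed d),
      opL d s K φ w = ∫ z, (φ (w+z) - φ w - fderiv ℝ φ w z) * K z := by
    intro K w
    unfold opL incr
    simp only [if_neg hns1, if_neg hns2]
  have hptK : ∀ K ∈ S, ∀ w : Ed d,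
      Integrable (fun z => (φ (w+z) - φ w - fderiv ℝ φ w z) * K z) ∧
      |∫ z, (φ (w+z) - φ w - fderiv ℝ φ w z) * K z| ≤ M := by
    rintro K ⟨hKm, hK0, -, hKu, -⟩ w
    exact caseB_point hs1 hs2 hLam hC hR hφ hgrad hhess hKm hK0 hKu w
  have hfg : ∀ K ∈ S, |opL d s K φ x - opL d s K φ y| ≤ E := by
    intro K hK
    have hix := (hptK K hK x).1
    have hiy := (hptK K hK y).1
    obtain ⟨hKm, hK0, -, hKu, -⟩ := hK
    have hsub : ∫ z, ((φ (x+z) - φ x - fderiv ℝ φ x z)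
          - (φ (y+z) - φ y - fderiv ℝ φ y z)) * K z =
        (∫ z, (φ (x+z) - φ x - fderiv ℝ φ x z) * K z)
          - ∫ z, (φ (y+z) - φ y - fderiv ℝ φ y z) * K z := by
      rw [← integral_sub hix hiy]
      congr 1; funext z; ring
    rw [hrep K x, hrep K y, ← hsub, hEeq]
    exact caseB_diff hs1 hs2 hLam hC hR hφ hhess hKm hK0 hKu x y hnorm
  have hfM : ∀ K ∈ S, |opL d s K φ x| ≤ M := by
    intro K hK; rw [hrep]; exact (hptK K hK x).2
  have hgM : ∀ K ∈ S, |opL d s K φ y| ≤ M := by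
    intro K hK; rw [hrep]; exact (hptK K hK y).2
  exact sInf_sSup_est S (fun K => opL d s K φ x) (fun K => opL d s K φ y) E M
    hE0 hfM hgM hfg

end MainB


section MainC
variable {d : ℕ} {s Lam C R : ℝ} {φ : Ed d → ℝ}

lemma rpow_half_facts {a : ℝ} (ha : 0 ≤ a) :
    a ^ ((3:ℝ)/2) = a * a ^ ((1:ℝ)/2) := by
  rcases eq_or_lt_of_le ha with h | h
  · rw [← h]
    rw [Real.zero_rpow (by norm_num), Real.zero_rpow (by norm_num), mul_zero]
  · calc a ^ ((3:ℝ)/2) = a ^ ((1:ℝ) + 1/2) := by norm_num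
      _ = a ^ (1:ℝ) * a ^ ((1:ℝ)/2) := Real.rpow_add h 1 (1/2)
      _ = a * a ^ ((1:ℝ)/2) := by rw [Real.rpow_one]

lemma sq_le_rpow_threehalf {a r : ℝ} (ha : 0 ≤ a) (har : a ≤ r) :
    a * a ≤ r ^ ((1:ℝ)/2) * a ^ ((3:ℝ)/2) := by
  have hr : 0 ≤ r := le_trans ha har
  have h1 : a ^ ((1:ℝ)/2) ≤ r ^ ((1:ℝ)/2) := Real.rpow_le_rpow ha har (by norm_num)
  have h2 : a * a = a ^ ((1:ℝ)/2) * a ^ ((3:ℝ)/2) := by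
    rw [rpow_half_facts ha]
    rcases eq_or_lt_of_le ha with h | h
    · rw [← h]; simp
    · rw [show a ^ ((1:ℝ)/2) * (a * a ^ ((1:ℝ)/2)) =
        a * (a ^ ((1:ℝ)/2) * a ^ ((1:ℝ)/2)) by ring, ← Real.rpow_add h]
      norm_num
  rw [h2]
  exact mul_le_mul_of_nonneg_right h1 (Real.rpow_nonneg ha _)

lemma caseC_point (hs : s = 1/2) (hLam : 0 < Lam) (hC : 0 < C)
    (hR : 0 < R) (hd : 1 ≤ d) (hφ : ContDiff ℝ 2 φ)
    (hgrad : ∀ x, ‖fderiv ℝ φ x‖ ≤ C / R)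
    (hhess : ∀ x, ‖fderiv ℝ (fun z => fderiv ℝ φ z) x‖ ≤ C / R ^ 2)
    (hsupp : Function.support φ ⊆ closedBall (0 : Ed d) R)
    {K : Ed d → ℝ} (hKm : Measurable K) (hK0 : ∀ y, 0 ≤ K y)
    (hKu : ∀ r : ℝ, 0 < r →
      ∫⁻ y in ball (0 : Ed d) (2*r) \ ball 0 r, ENNReal.ofReal (K y) ≤
        ENNReal.ofReal (Lam * r ^ (-(2*s)))) (x : Ed d) :
    Integrable (fun z =>
        (φ (x+z) - φ x - (if ‖z‖ < 1 then fderiv ℝ φ x z else 0)) * K z) ∧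
      |∫ z, (φ (x+z) - φ x - (if ‖z‖ < 1 then fderiv ℝ φ x z else 0)) * K z| ≤
        (C/R^2 + 6*C) * Lam * dyC s (3/2) (1/2) * (1:ℝ) ^ ((3:ℝ)/2 - 2*s) := by
  have hs0 : 0 < s := by rw [hs]; norm_num
  have hφd : Differentiable ℝ φ := hφ.differentiable (by norm_num)
  have hA : (0:ℝ) < C/R^2 + 6*C := by positivity
  have hgm : Measurable (fun z : Ed d =>
      φ (x+z) - φ x - (if ‖z‖ < 1 then fderiv ℝ φ x z else 0)) := by
    apply Measurable.sub
    · exact ((hφ.continuous.comp (continuous_const.add continuous_id)).sub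
        continuous_const).measurable
    · exact Measurable.ite (isOpen_lt continuous_norm continuous_const).measurableSet
        (fderiv ℝ φ x).continuous.measurable measurable_const
  have hgb : ∀ z : Ed d, |φ (x+z) - φ x - (if ‖z‖ < 1 then fderiv ℝ φ x z else 0)| ≤
      (C/R^2 + 6*C) * min (‖z‖ ^ ((3:ℝ)/2)) ((1:ℝ) ^ ((3:ℝ)/2-1/2) * ‖z‖ ^ ((1:ℝ)/2)) := by
    intro z
    rw [Real.one_rpow, one_mul]
    by_cases hz1 : ‖z‖ < 1
    · rw [if_pos hz1]
      have ht := taylor1 hφ hhess x z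
      have h32 : ‖z‖ * ‖z‖ ≤ ‖z‖ ^ ((3:ℝ)/2) := by
        have := sq_le_rpow_threehalf (norm_nonneg z) hz1.le
        rw [Real.one_rpow, one_mul] at this
        exact this
      have h12 : ‖z‖ ^ ((3:ℝ)/2) ≤ ‖z‖ ^ ((1:ℝ)/2) := by
        rcases eq_or_lt_of_le (norm_nonneg z) with h | h
        · rw [← h]; norm_num
        · exact Real.rpow_le_rpow_of_exponent_ge h hz1.le (by norm_num)
      apply le_mul_min
      · calc |φ (x+z) - φ x - fderiv ℝ φ x z| ≤ C/R^2 * (‖z‖*‖z‖) := ht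
          _ ≤ (C/R^2) * ‖z‖ ^ ((3:ℝ)/2) :=
            mul_le_mul_of_nonneg_left h32 (by positivity)
          _ ≤ (C/R^2 + 6*C) * ‖z‖ ^ ((3:ℝ)/2) :=
            mul_le_mul_of_nonneg_right (by linarith) (Real.rpow_nonneg (norm_nonneg z) _)
      · calc |φ (x+z) - φ x - fderiv ℝ φ x z| ≤ C/R^2 * (‖z‖*‖z‖) := ht
          _ ≤ (C/R^2) * ‖z‖ ^ ((3:ℝ)/2) :=
            mul_le_mul_of_nonneg_left h32 (by positivity)
          _ ≤ (C/R^2) * ‖z‖ ^ ((1:ℝ)/2) :=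
            mul_le_mul_of_nonneg_left h12 (by positivity)
          _ ≤ (C/R^2 + 6*C) * ‖z‖ ^ ((1:ℝ)/2) :=
            mul_le_mul_of_nonneg_right (by linarith) (Real.rpow_nonneg (norm_nonneg z) _)
    · rw [if_neg hz1, sub_zero]
      push_neg at hz1
      have h6 : |φ (x+z) - φ x| ≤ 6*C := by
        calc |φ (x+z) - φ x| ≤ |φ (x+z)| + |φ x| := abs_sub _ _
          _ ≤ 3*C + 3*C := add_le_add (sup_bound hd hC hR hφd hgrad hsupp _)
              (sup_bound hd hC hR hφd hgrad hsupp _)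
          _ = 6*C := by ring
      have h12 : (1:ℝ) ≤ ‖z‖ ^ ((1:ℝ)/2) := by
        calc (1:ℝ) = (1:ℝ) ^ ((1:ℝ)/2) := (Real.one_rpow _).symm
          _ ≤ ‖z‖ ^ ((1:ℝ)/2) := Real.rpow_le_rpow (by norm_num) hz1 (by norm_num)
      have h32 : (1:ℝ) ≤ ‖z‖ ^ ((3:ℝ)/2) := by
        calc (1:ℝ) = (1:ℝ) ^ ((3:ℝ)/2) := (Real.one_rpow _).symm
          _ ≤ ‖z‖ ^ ((3:ℝ)/2) := Real.rpow_le_rpow (by norm_num) hz1 (by norm_num)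
      have hCR : (0:ℝ) ≤ C/R^2 := by positivity
      apply le_mul_min
      · calc |φ (x+z) - φ x| ≤ 6*C := h6
          _ = 6*C*1 := by ring
          _ ≤ 6*C*(‖z‖^((3:ℝ)/2)) := mul_le_mul_of_nonneg_left h32 (by positivity)
          _ ≤ (C/R^2 + 6*C)*‖z‖^((3:ℝ)/2) :=
            mul_le_mul_of_nonneg_right (by linarith) (le_trans zero_le_one h32)
      · calc |φ (x+z) - φ x| ≤ 6*C := h6
          _ = 6*C*1 := by ring
          _ ≤ 6*C*(‖z‖^((1:ℝ)/2)) := mul_le_mul_of_nonneg_left h12 (by positivity)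
          _ ≤ (C/R^2 + 6*C)*‖z‖^((1:ℝ)/2) :=
            mul_le_mul_of_nonneg_right (by linarith) (le_trans zero_le_one h12)
  exact bound_transfer hs0 hLam hKm hK0 hKu (by norm_num) (by rw [hs]; norm_num)
    (by rw [hs]; norm_num) hA.le (by norm_num) hgm hgb

end MainC


variable {d : ℕ} {s Lam C R : ℝ} {φ : Ed d → ℝ}

lemma caseC_diff (hs : s = 1/2) (hLam : 0 < Lam) (hC : 0 < C) (hR : 0 < R)
    (hφ : ContDiff ℝ 2 φ)
    (hgrad : ∀ x, ‖fderiv ℝ φ x‖ ≤ C / R)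
    (hhess : ∀ x, ‖fderiv ℝ (fun z => fderiv ℝ φ z) x‖ ≤ C / R ^ 2)
    {K : Ed d → ℝ} (hKm : Measurable K) (hK0 : ∀ y, 0 ≤ K y)
    (hKu : ∀ r : ℝ, 0 < r →
      ∫⁻ y in ball (0 : Ed d) (2*r) \ ball 0 r, ENNReal.ofReal (K y) ≤
        ENNReal.ofReal (Lam * r ^ (-(2*s))))
    (hKc : ∀ r : ℝ, 0 < r →
      (∫ y in ball (0 : Ed d) (2*r) \ ball 0 r, K y • y) = (0 : Ed d))
    (x y : Ed d) (hxy : 0 < ‖x - y‖)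
    (hintx : Integrable (fun z =>
      (φ (x+z) - φ x - (if ‖z‖ < 1 then fderiv ℝ φ x z else 0)) * K z))
    (hinty : Integrable (fun z =>
      (φ (y+z) - φ y - (if ‖z‖ < 1 then fderiv ℝ φ y z else 0)) * K z)) :
    |(∫ z, (φ (x+z) - φ x - (if ‖z‖ < 1 then fderiv ℝ φ x z else 0)) * K z) -
      ∫ z, (φ (y+z) - φ y - (if ‖z‖ < 1 then fderiv ℝ φ y z else 0)) * K z| ≤
      6*C*Lam*dyC s (3/2) (1/2) * Real.sqrt ‖x-y‖ * Real.sqrt R / R^2 := by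
  have hs0 : (0:ℝ) < s := by rw [hs]; norm_num
  have hφd : Differentiable ℝ φ := hφ.differentiable (by norm_num)
  have hdy := dyC_pos (s := s) (p := 3/2) (q := 1/2) (by rw [hs]; norm_num)
    (by rw [hs]; norm_num)
  have hsq : 0 < Real.sqrt (‖x-y‖*R) := Real.sqrt_pos.2 (by positivity)
  obtain ⟨j, hj⟩ := exists_mem_Ico_zpow hsq one_lt_two
  set r := (2:ℝ)^j with hrdef
  have hr0 : 0 < r := zpow_pos (by norm_num) j
  have hr1 : r ≤ Real.sqrt (‖x-y‖*R) := hj.1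
  have hr2 : Real.sqrt (‖x-y‖*R) < r*2 := by
    have h2 := hj.2
    rwa [zpow_add_one₀ (two_ne_zero)] at h2
  have hrh : r ^ ((1:ℝ)/2) * r ^ ((1:ℝ)/2) = r := by
    rw [← Real.rpow_add hr0]; norm_num
  have hrh0 : 0 < r ^ ((1:ℝ)/2) := Real.rpow_pos_of_pos hr0 _
  set w : Ed d →L[ℝ] ℝ := fderiv ℝ φ x - fderiv ℝ φ y with hw
  set A := 2*(C/R^2)*r^((1:ℝ)/2) + 2*(C/R)*‖x-y‖/(r^((3:ℝ)/2)) with hA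
  have hr32 : r ^ ((3:ℝ)/2) = r * r ^ ((1:ℝ)/2) := rpow_half_facts hr0.le
  have hr320 : 0 < r ^ ((3:ℝ)/2) := Real.rpow_pos_of_pos hr0 _
  have hA0 : 0 < A := by
    apply add_pos
    · positivity
    · positivity
  set gr : Ed d → ℝ := fun z =>
    (φ (x+z) - φ x) - (φ (y+z) - φ y) - (if ‖z‖ < r then w z else 0) with hgr
  have hgm : Measurable gr := by
    apply Measurable.sub
    · apply Measurable.sub
      · exact ((hφ.continuous.comp (continuous_const.add continuous_id)).sub
          continuous_const).measurable
      · exact ((hφ.continuous.comp (continuous_const.add continuous_id)).sub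
          continuous_const).measurable
    · exact Measurable.ite (isOpen_lt continuous_norm continuous_const).measurableSet
        w.continuous.measurable measurable_const
  have hgrb : ∀ z : Ed d, |gr z| ≤
      A * min (‖z‖ ^ ((3:ℝ)/2)) (r ^ ((3:ℝ)/2-1/2) * ‖z‖ ^ ((1:ℝ)/2)) := by
    intro z
    rw [show (3:ℝ)/2-1/2 = 1 by norm_num, Real.rpow_one]
    have hz12 : (0:ℝ) ≤ ‖z‖ ^ ((1:ℝ)/2) := Real.rpow_nonneg (norm_nonneg z) _
    have hz32 : (0:ℝ) ≤ ‖z‖ ^ ((3:ℝ)/2) := Real.rpow_nonneg (norm_nonneg z) _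
    by_cases hzr : ‖z‖ < r
    · rw [hgr]
      simp only [if_pos hzr]
      have heq : (φ (x+z) - φ x) - (φ (y+z) - φ y) - w z =
          (φ (x+z) - φ x - fderiv ℝ φ x z) - (φ (y+z) - φ y - fderiv ℝ φ y z) := by
        rw [hw, ContinuousLinearMap.sub_apply]; ring
      rw [heq]
      have ht1 := taylor1 hφ hhess x z
      have ht2 := taylor1 hφ hhess y z
      have habs := abs_sub (φ (x+z) - φ x - fderiv ℝ φ x z)
        (φ (y+z) - φ y - fderiv ℝ φ y z)
      have hd2 : |(φ (x+z) - φ x - fderiv ℝ φ x z) -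
          (φ (y+z) - φ y - fderiv ℝ φ y z)| ≤ 2*(C/R^2)*(‖z‖*‖z‖) := by linarith
      have hsq32 : ‖z‖*‖z‖ ≤ r^((1:ℝ)/2) * ‖z‖^((3:ℝ)/2) :=
        sq_le_rpow_threehalf (norm_nonneg z) hzr.le
      have hkey1 : |(φ (x+z) - φ x - fderiv ℝ φ x z) -
          (φ (y+z) - φ y - fderiv ℝ φ y z)| ≤ A * ‖z‖^((3:ℝ)/2) := by
        calc |(φ (x+z) - φ x - fderiv ℝ φ x z) - (φ (y+z) - φ y - fderiv ℝ φ y z)|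
            ≤ 2*(C/R^2)*(‖z‖*‖z‖) := hd2
          _ ≤ 2*(C/R^2)*(r^((1:ℝ)/2) * ‖z‖^((3:ℝ)/2)) :=
            mul_le_mul_of_nonneg_left hsq32 (by positivity)
          _ = (2*(C/R^2)*r^((1:ℝ)/2)) * ‖z‖^((3:ℝ)/2) := by ring
          _ ≤ A * ‖z‖^((3:ℝ)/2) := by
            apply mul_le_mul_of_nonneg_right _ hz32
            rw [hA]
            have : (0:ℝ) ≤ 2*(C/R)*‖x-y‖/(r^((3:ℝ)/2)) := by positivity
            linarith
      apply le_mul_min hkey1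
      refine le_trans hkey1 ?_
      apply mul_le_mul_of_nonneg_left _ hA0.le
      have h1 : ‖z‖^((3:ℝ)/2) = ‖z‖ * ‖z‖^((1:ℝ)/2) := rpow_half_facts (norm_nonneg z)
      rw [h1]
      exact mul_le_mul_of_nonneg_right hzr.le hz12
    · rw [hgr]
      simp only [if_neg hzr]
      push_neg at hzr
      have hbr : |(φ (x+z) - φ x) - (φ (y+z) - φ y) - 0| ≤ 2*(C/R)*‖x-y‖ := by
        rw [sub_zero]
        have h1 := lip_of_bound hφd hgrad (x+z) (y+z)
        have h2 := lip_of_bound hφd hgrad x y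
        rw [Real.norm_eq_abs] at h1 h2
        rw [show (x+z) - (y+z) = x - y by abel] at h1
        calc |(φ (x+z) - φ x) - (φ (y+z) - φ y)|
            = |(φ (x+z) - φ (y+z)) - (φ x - φ y)| := by ring_nf
          _ ≤ |φ (x+z) - φ (y+z)| + |φ x - φ y| := abs_sub _ _
          _ ≤ (C/R)*‖x-y‖ + (C/R)*‖x-y‖ := add_le_add h1 h2
          _ = 2*(C/R)*‖x-y‖ := by ring
      have hz12r : r^((1:ℝ)/2) ≤ ‖z‖^((1:ℝ)/2) :=
        Real.rpow_le_rpow hr0.le hzr (by norm_num)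
      have hz32r : r^((3:ℝ)/2) ≤ ‖z‖^((3:ℝ)/2) :=
        Real.rpow_le_rpow hr0.le hzr (by norm_num)
      have hAr : 2*(C/R)*‖x-y‖ ≤ A * r^((3:ℝ)/2) := by
        rw [hA, add_mul]
        have h1 : 2*(C/R)*‖x-y‖/(r^((3:ℝ)/2)) * r^((3:ℝ)/2) = 2*(C/R)*‖x-y‖ := by
          field_simp
        rw [h1]
        have : (0:ℝ) ≤ 2*(C/R^2)*r^((1:ℝ)/2) * r^((3:ℝ)/2) := by positivity
        linarith
      apply le_mul_min
      · exact le_trans hbr (le_trans hAr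
          (mul_le_mul_of_nonneg_left hz32r hA0.le))
      · refine le_trans hbr (le_trans hAr ?_)
        rw [hr32]
        exact mul_le_mul_of_nonneg_left
          (mul_le_mul_of_nonneg_left hz12r hr0.le) hA0.le
  have htrans := bound_transfer hs0 hLam hKm hK0 hKu (by norm_num)
    (by rw [hs]; norm_num) (by rw [hs]; norm_num) hA0.le hr0 hgm hgrb
  set chi : Ed d → ℝ := fun z =>
    (if ‖z‖ < 1 then w z else 0) - (if ‖z‖ < r then w z else 0) with hchidef
  have hchi : Integrable (fun z => chi z * K z) ∧ (∫ z, chi z * K z) = 0 := by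
    rcases le_or_gt r 1 with hrle | hrgt
    · have hj0 : j ≤ 0 := by
        by_contra hcon
        push_neg at hcon
        have hrnat : r = (2:ℝ)^(j.toNat) := by
          rw [hrdef, ← zpow_natCast (2:ℝ) j.toNat, Int.toNat_of_nonneg hcon.le]
        have : (1:ℝ) < 2^(j.toNat) := one_lt_pow₀ (by norm_num) (by omega)
        rw [← hrnat] at this; linarith
      have hm : (2:ℝ)^((-j).toNat) * r = 1 := by
        rw [hrdef, ← zpow_natCast (2:ℝ) (-j).toNat, Int.toNat_of_nonneg (by omega),
          ← zpow_add₀ (two_ne_zero : (2:ℝ) ≠ 0)]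
        norm_num
      have hzone := zone_cancel hs0 hKm hK0 hKu hKc w r hr0 (-j).toNat
      rw [hm] at hzone
      have hmeas : MeasurableSet (ball (0:Ed d) 1 \ ball 0 r) :=
        measurableSet_ball.diff measurableSet_ball
      have heqf : (fun z => chi z * K z) =
          Set.indicator (ball (0:Ed d) 1 \ ball 0 r) (fun z => w z * K z) := by
        funext z
        rw [hchidef]
        simp only [Set.indicator, mem_diff, mem_ball_zero_iff]
        by_cases h2 : ‖z‖ < r
        · have h1 : ‖z‖ < 1 := lt_of_lt_of_le h2 hrle
          rw [if_pos h1, if_pos h2, if_neg (by tauto)]; ring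
        · by_cases h1 : ‖z‖ < 1
          · rw [if_pos h1, if_neg h2, if_pos ⟨h1, h2⟩]; ring
          · rw [if_neg h1, if_neg h2, if_neg (by tauto)]; ring
      refine ⟨?_, ?_⟩
      · rw [heqf]; exact hzone.1.integrable_indicator hmeas
      · rw [heqf, integral_indicator hmeas]; exact hzone.2
    · have hj1 : 0 ≤ j := by
        by_contra hcon
        push_neg at hcon
        have hrnat : r = ((2:ℝ)^((-j).toNat))⁻¹ := by
          rw [hrdef, ← zpow_natCast (2:ℝ) (-j).toNat, Int.toNat_of_nonneg (by omega),
            ← zpow_neg]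
          norm_num
        have h1 : (1:ℝ) ≤ 2^((-j).toNat) := one_le_pow₀ (by norm_num)
        have h2 : ((2:ℝ)^((-j).toNat))⁻¹ ≤ 1 := inv_le_one_of_one_le₀ h1
        rw [← hrnat] at h2; linarith
      have hm : (2:ℝ)^(j.toNat) * 1 = r := by
        rw [hrdef, ← zpow_natCast (2:ℝ) j.toNat, Int.toNat_of_nonneg hj1, mul_one]
      have hzone := zone_cancel hs0 hKm hK0 hKu hKc w 1 one_pos j.toNat
      rw [hm] at hzone
      have hmeas : MeasurableSet (ball (0:Ed d) r \ ball 0 1) :=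
        measurableSet_ball.diff measurableSet_ball
      have heqf : (fun z => chi z * K z) = fun z =>
          - Set.indicator (ball (0:Ed d) r \ ball 0 1) (fun z => w z * K z) z := by
        funext z
        rw [hchidef]
        simp only [Set.indicator, mem_diff, mem_ball_zero_iff]
        by_cases h1 : ‖z‖ < 1
        · have h2 : ‖z‖ < r := lt_trans h1 hrgt
          rw [if_pos h1, if_pos h2, if_neg (by tauto)]; ring
        · by_cases h2 : ‖z‖ < r
          · rw [if_neg h1, if_pos h2, if_pos ⟨h2, h1⟩]; ring
          · rw [if_neg h1, if_neg h2, if_neg (by tauto)]; ring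
      refine ⟨?_, ?_⟩
      · rw [heqf]; exact (hzone.1.integrable_indicator hmeas).neg
      · rw [heqf, integral_neg, integral_indicator hmeas, hzone.2, neg_zero]
  have hswap : (∫ z, (φ (x+z) - φ x - (if ‖z‖ < 1 then fderiv ℝ φ x z else 0)) * K z) -
      (∫ z, (φ (y+z) - φ y - (if ‖z‖ < 1 then fderiv ℝ φ y z else 0)) * K z) =
      ∫ z, gr z * K z := by
    rw [← integral_sub hintx hinty]
    have hpt : ∀ z : Ed d,
        (φ (x+z) - φ x - (if ‖z‖ < 1 then fderiv ℝ φ x z else 0)) * K z -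
        (φ (y+z) - φ y - (if ‖z‖ < 1 then fderiv ℝ φ y z else 0)) * K z =
        gr z * K z - chi z * K z := by
      intro z
      rw [hgr, hchidef, hw]
      by_cases h1 : ‖z‖ < 1
      · by_cases h2 : ‖z‖ < r
        · simp only [if_pos h1, if_pos h2, ContinuousLinearMap.sub_apply]; ring
        · simp only [if_pos h1, if_neg h2, ContinuousLinearMap.sub_apply]; ring
      · by_cases h2 : ‖z‖ < r
        · simp only [if_neg h1, if_pos h2, ContinuousLinearMap.sub_apply]; ring
        · simp only [if_neg h1, if_neg h2, ContinuousLinearMap.sub_apply]; ring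
    calc ∫ z, ((φ (x+z) - φ x - (if ‖z‖ < 1 then fderiv ℝ φ x z else 0)) * K z -
          (φ (y+z) - φ y - (if ‖z‖ < 1 then fderiv ℝ φ y z else 0)) * K z)
        = ∫ z, (gr z * K z - chi z * K z) := by
          congr 1; funext z; exact hpt z
      _ = (∫ z, gr z * K z) - ∫ z, chi z * K z := integral_sub htrans.1 hchi.1
      _ = ∫ z, gr z * K z := by rw [hchi.2, sub_zero]
  rw [hswap]
  have hb := htrans.2
  rw [show (3:ℝ)/2 - 2*s = 1/2 by rw [hs]; norm_num] at hb
  have hsnm : 0 < Real.sqrt ‖x-y‖ := Real.sqrt_pos.2 hxy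
  have hsR : 0 < Real.sqrt R := Real.sqrt_pos.2 hR
  have hmulsq : Real.sqrt (‖x-y‖*R) = Real.sqrt ‖x-y‖ * Real.sqrt R :=
    Real.sqrt_mul hxy.le R
  have hAr12 : A * r^((1:ℝ)/2) = 2*(C/R^2)*r + 2*(C/R)*‖x-y‖/r := by
    rw [hA, add_mul]
    have e1 : 2*(C/R^2)*r^((1:ℝ)/2)*r^((1:ℝ)/2) = 2*(C/R^2)*r := by
      calc 2*(C/R^2)*r^((1:ℝ)/2)*r^((1:ℝ)/2)
          = 2*(C/R^2)*(r^((1:ℝ)/2)*r^((1:ℝ)/2)) := by ring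
        _ = 2*(C/R^2)*r := by rw [hrh]
    have e2 : 2*(C/R)*‖x-y‖/(r^((3:ℝ)/2))*r^((1:ℝ)/2) = 2*(C/R)*‖x-y‖/r := by
      rw [hr32, ← div_div, div_mul_cancel₀ _ hrh0.ne']
    rw [e1, e2]
  have hmain : 2*(C/R^2)*r + 2*(C/R)*‖x-y‖/r ≤
      6*C*Real.sqrt ‖x-y‖*Real.sqrt R/R^2 := by
    have p1 : 2*(C/R^2)*r ≤ 2*(C/R^2)*(Real.sqrt ‖x-y‖*Real.sqrt R) := by
      apply mul_le_mul_of_nonneg_left _ (by positivity)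
      rw [← hmulsq]; exact hr1
    have hhalf : (Real.sqrt ‖x-y‖*Real.sqrt R)/2 ≤ r := by
      rw [← hmulsq]; linarith
    have p2 : 2*(C/R)*‖x-y‖/r ≤ 2*(C/R)*‖x-y‖/((Real.sqrt ‖x-y‖*Real.sqrt R)/2) :=
      div_le_div_of_nonneg_left (by positivity) (by positivity) hhalf
    have e3 : 2*(C/R)*‖x-y‖/((Real.sqrt ‖x-y‖*Real.sqrt R)/2) =
        4*C*Real.sqrt ‖x-y‖*Real.sqrt R/R^2 := by
      have hnm2 : Real.sqrt ‖x-y‖ * Real.sqrt ‖x-y‖ = ‖x-y‖ :=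
        Real.mul_self_sqrt hxy.le
      have hR2 : Real.sqrt R * Real.sqrt R = R := Real.mul_self_sqrt hR.le
      have key : (4*C*Real.sqrt ‖x-y‖*Real.sqrt R/R^2) *
          ((Real.sqrt ‖x-y‖*Real.sqrt R)/2) = 2*(C/R)*‖x-y‖ := by
        calc (4*C*Real.sqrt ‖x-y‖*Real.sqrt R/R^2) *
            ((Real.sqrt ‖x-y‖*Real.sqrt R)/2)
            = 2*C*((Real.sqrt ‖x-y‖*Real.sqrt ‖x-y‖))*
              ((Real.sqrt R*Real.sqrt R))/R^2 := by ring
          _ = 2*C*‖x-y‖*R/R^2 := by rw [hnm2, hR2]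
          _ = 2*(C/R)*‖x-y‖ := by
              field_simp
      rw [div_eq_iff (ne_of_gt (show (0:ℝ) <
        (Real.sqrt ‖x-y‖*Real.sqrt R)/2 by positivity))]
      exact key.symm
    have e4 : 2*(C/R^2)*(Real.sqrt ‖x-y‖*Real.sqrt R) =
        2*C*Real.sqrt ‖x-y‖*Real.sqrt R/R^2 := by ring
    rw [e3] at p2
    rw [e4] at p1
    calc 2*(C/R^2)*r + 2*(C/R)*‖x-y‖/r
        ≤ 2*C*Real.sqrt ‖x-y‖*Real.sqrt R/R^2 +
          4*C*Real.sqrt ‖x-y‖*Real.sqrt R/R^2 := add_le_add p1 p2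
      _ = 6*C*Real.sqrt ‖x-y‖*Real.sqrt R/R^2 := by ring
  calc |∫ z, gr z * K z| ≤ A * Lam * dyC s (3/2) (1/2) * r^((1:ℝ)/2) := hb
    _ = (Lam * dyC s (3/2) (1/2)) * (A * r^((1:ℝ)/2)) := by ring
    _ = (Lam * dyC s (3/2) (1/2)) * (2*(C/R^2)*r + 2*(C/R)*‖x-y‖/r) := by
        rw [hAr12]
    _ ≤ (Lam * dyC s (3/2) (1/2)) * (6*C*Real.sqrt ‖x-y‖*Real.sqrt R/R^2) :=
        mul_le_mul_of_nonneg_left hmain (by positivity)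
    _ = 6*C*Lam*dyC s (3/2) (1/2) * Real.sqrt ‖x-y‖ * Real.sqrt R / R^2 := by ring


lemma main_caseC (hd : 1 ≤ d) (hs : s = (1:ℝ)/2)
    (hLam : 0 < Lam) (hC : 0 < C) (lam ρ : ℝ) (R : ℝ) (hR : 0 < R)
    (φ : Ed d → ℝ) (hφ : ContDiff ℝ 2 φ)
    (hsupp : Function.support φ ⊆ closedBall (0 : Ed d) R)
    (hgrad : ∀ x, ‖fderiv ℝ φ x‖ ≤ C / R)
    (hhess : ∀ x, ‖fderiv ℝ (fun z => fderiv ℝ φ z) x‖ ≤ C / R ^ 2) (x y : Ed d) :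
    |pucciInf d s lam Lam ρ φ x - pucciInf d s lam Lam ρ φ y| ≤
        (6*C*Lam*dyC s (3/2) (1/2)) / R ^ (2*s) * (‖x - y‖ / R) ^ ((1:ℝ)/2) ∧
      |pucciSup d s lam Lam ρ φ x - pucciSup d s lam Lam ρ φ y| ≤
        (6*C*Lam*dyC s (3/2) (1/2)) / R ^ (2*s) * (‖x - y‖ / R) ^ ((1:ℝ)/2) := by
  have hdy := dyC_pos (s := s) (p := 3/2) (q := 1/2) (by rw [hs]; norm_num)
    (by rw [hs]; norm_num)
  by_cases hxy : x = y
  · subst hxy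
    simp only [sub_self, abs_zero]
    have h0 : 0 ≤ (6*C*Lam*dyC s (3/2) (1/2)) / R ^ (2*s) *
        (‖(0:Ed d)‖ / R) ^ ((1:ℝ)/2) := by
      apply mul_nonneg (div_nonneg (by positivity) (Real.rpow_nonneg hR.le _))
      exact Real.rpow_nonneg (div_nonneg (norm_nonneg _) hR.le) _
    exact ⟨h0, h0⟩
  have hnorm : 0 < ‖x - y‖ := by
    rw [norm_pos_iff]; exact sub_ne_zero.2 hxy
  have hsnm : 0 < Real.sqrt ‖x-y‖ := Real.sqrt_pos.2 hnorm
  have hsR : 0 < Real.sqrt R := Real.sqrt_pos.2 hR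
  have hR2 : Real.sqrt R * Real.sqrt R = R := Real.mul_self_sqrt hR.le
  set E := (6*C*Lam*dyC s (3/2) (1/2)) / R ^ (2*s) * (‖x - y‖ / R) ^ ((1:ℝ)/2) with hE
  have hEeq : E = 6*C*Lam*dyC s (3/2) (1/2) * Real.sqrt ‖x-y‖ * Real.sqrt R / R^2 := by
    rw [hE, hs, show (2:ℝ)*((1:ℝ)/2) = 1 by norm_num, Real.rpow_one,
      ← Real.sqrt_eq_rpow, Real.sqrt_div hnorm.le, div_mul_div_comm,
      div_eq_div_iff (by positivity) (by positivity)]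
    linear_combination
      (-(6*C*Lam*dyC ((1:ℝ)/2) (3/2) (1/2)*Real.sqrt ‖x-y‖*R)) * hR2
  have hE0 : 0 ≤ E := by
    rw [hEeq]
    positivity
  set M := (C/R^2 + 6*C) * Lam * dyC s (3/2) (1/2) * (1:ℝ)^((3:ℝ)/2 - 2*s) with hM
  set S := KernelClass d s lam Lam ρ with hS
  have hns1 : ¬ (s < 1/2) := by rw [hs]; exact lt_irrefl _
  have hrep : ∀ (K : Ed d → ℝ) (v : Ed d), opL d s K φ v =
      ∫ z, (φ (v+z) - φ v - (if ‖z‖ < 1 then fderiv ℝ φ v z else 0)) * K z := by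
    intro K v
    unfold opL incr
    simp only [if_neg hns1, if_pos hs]
  have hptK : ∀ K ∈ S, ∀ v : Ed d,
      Integrable (fun z => (φ (v+z) - φ v - (if ‖z‖ < 1 then fderiv ℝ φ v z else 0)) * K z) ∧
      |∫ z, (φ (v+z) - φ v - (if ‖z‖ < 1 then fderiv ℝ φ v z else 0)) * K z| ≤ M := by
    rintro K ⟨hKm, hK0, -, hKu, -⟩ v
    exact caseC_point hs hLam hC hR hd hφ hgrad hhess hsupp hKm hK0 hKu v
  have hfg : ∀ K ∈ S, |opL d s K φ x - opL d s K φ y| ≤ E := by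
    intro K hK
    have hix := (hptK K hK x).1
    have hiy := (hptK K hK y).1
    obtain ⟨hKm, hK0, -, hKu, hKc⟩ := hK
    rw [hrep K x, hrep K y, hEeq]
    exact caseC_diff hs hLam hC hR hφ hgrad hhess hKm hK0 hKu (hKc hs) x y
      hnorm hix hiy
  have hfM : ∀ K ∈ S, |opL d s K φ x| ≤ M := by
    intro K hK; rw [hrep]; exact (hptK K hK x).2
  have hgM : ∀ K ∈ S, |opL d s K φ y| ≤ M := by
    intro K hK; rw [hrep]; exact (hptK K hK y).2
  exact sInf_sSup_est S (fun K => opL d s K φ x) (fun K => opL d s K φ y) E M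
    hE0 hfM hgM hfg

end S9

/-- Hölder estimate for the Pucci operators applied to a compactly
supported `C^2` bump function, at the natural scale. -/

theorem statement9 (d : ℕ) (hd : 1 ≤ d) (s Lam C : ℝ) (hs : s ∈ Ioo (0:ℝ) 1)
    (hLam : 0 < Lam) (hC : 0 < C) :
    ∃ Ct γ : ℝ, 0 < Ct ∧ 0 < γ ∧
      (s < 1 / 2 → γ = 1 - 2 * s) ∧ (1 / 2 < s → γ = 2 - 2 * s) ∧
      (s = 1 / 2 → γ = 1 / 2) ∧
      ∀ lam ρ : ℝ, 0 < lam → lam ≤ Lam → 0 ≤ ρ → ∀ R : ℝ, 0 < R →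
        ∀ φ : Ed d → ℝ, ContDiff ℝ 2 φ →
          Function.support φ ⊆ closedBall (0 : Ed d) R →
          (∀ x, ‖fderiv ℝ φ x‖ ≤ C / R) →
          (∀ x, ‖fderiv ℝ (fun z => fderiv ℝ φ z) x‖ ≤ C / R ^ 2) →
          ∀ x y : Ed d,
            |pucciInf d s lam Lam ρ φ x - pucciInf d s lam Lam ρ φ y| ≤
              Ct / R ^ (2 * s) * (‖x - y‖ / R) ^ γ ∧
            |pucciSup d s lam Lam ρ φ x - pucciSup d s lam Lam ρ φ y| ≤
              Ct / R ^ (2 * s) * (‖x - y‖ / R) ^ γ := by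
  rcases lt_trichotomy s (1/2 : ℝ) with hlt | heq | hgt
  · refine ⟨2*C*Lam*S9.dyC s 1 0, 1 - 2*s, ?_, by linarith, fun _ => rfl,
      fun h => (lt_asymm hlt h).elim, fun h => absurd (h ▸ hlt) (lt_irrefl _), ?_⟩
    · have := S9.dyC_pos (s := s) (p := 1) (q := 0) (by linarith [hs.1]) (by linarith)
      positivity
    · intro lam ρ _ _ _ R hR φ hφ hsupp hgrad _ x y
      exact S9.main_caseA hd hs hlt hLam hC lam ρ R hR φ hφ hsupp hgrad x y
  · refine ⟨6*C*Lam*S9.dyC s (3/2) (1/2), 1/2, ?_, by norm_num,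
      fun h => absurd (heq ▸ h) (lt_irrefl _), fun h => absurd (heq ▸ h) (lt_irrefl _),
      fun _ => rfl, ?_⟩
    · have := S9.dyC_pos (s := s) (p := 3/2) (q := 1/2) (by rw [heq]; norm_num)
        (by rw [heq]; norm_num)
      positivity
    · intro lam ρ _ _ _ R hR φ hφ hsupp hgrad hhess x y
      exact S9.main_caseC hd heq hLam hC lam ρ R hR φ hφ hsupp hgrad hhess x y
  · refine ⟨2*C*Lam*S9.dyC s 2 1, 2 - 2*s, ?_, by linarith [hs.2], 
      fun h => (lt_asymm hgt h).elim, fun _ => rfl,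
      fun h => absurd (h ▸ hgt) (lt_irrefl _), ?_⟩
    · have := S9.dyC_pos (s := s) (p := 2) (q := 1) (by linarith) (by linarith [hs.2])
      positivity
    · intro lam ρ _ _ _ R hR φ hφ hsupp hgrad hhess x y
      exact S9.main_caseB hs hgt hLam hC lam ρ R hR φ hφ hgrad hhess x y
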